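/- arXiv:2305.12512 — 8 statements merged into one kernel-verified Lean document; each statement's English description precedes it below -/
import Mathlib

section
/- Let Y be an n×d real matrix with rows y_1^T,…,y_n^T, let B be the (n+d)×n matrix whose first n rows form the identity I_n and whose last d rows form Y^T. Fix a nonempty subset A ⊆ [n] and p ∈ A, let Y_⋆ = Y[A,:] and D = (I_d + Y_⋆^T Y_⋆)^{-1}, and let u ∈ ℝ^n be the unique vector with u[i]=0 for i ∉ A, u[p]=1, and B[:,A∖{p}] u[A∖{p}] = −Proj_{ColSp(B[:,A∖{p}])}(B e_p). Then ‖Bu‖² = 1/(1 − y_p^T D y_p). -/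
open Matrix

/-- Norm-squared formula `‖Bu‖² = 1/(1 - yₚᵀ D yₚ)` for the Gram–Schmidt step
direction `u` with pivot `p` and active set `A`, where `B = [Iₙ; Yᵀ]`. -/
theorem gsw_norm_Bu_sq (n d : ℕ) (Y : Matrix (Fin n) (Fin d) ℝ)
    (B : Matrix (Fin n ⊕ Fin d) (Fin n) ℝ) (hB : B = Matrix.fromRows 1 Yᵀ)
    (A : Finset (Fin n)) (hA : A.Nonempty) (p : Fin n) (hp : p ∈ A)
    (Yst : Matrix {i // i ∈ A} (Fin d) ℝ) (hYst : Yst = Matrix.of fun i j => Y i.1 j)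
    (D : Matrix (Fin d) (Fin d) ℝ) (hD : D = (1 + Ystᵀ * Yst)⁻¹)
    (u : Fin n → ℝ) (hu0 : ∀ i, i ∉ A → u i = 0) (hup : u p = 1)
    -- `Bu` is orthogonal to the span of the other active columns,
    -- i.e. `B[:,A∖{p}] u[A∖{p}] = -Proj_{ColSp(B[:,A∖{p}])}(B eₚ)`:
    (huo : ∀ i ∈ A, i ≠ p → (fun k => B k i) ⬝ᵥ (B *ᵥ u) = 0) :
    (B *ᵥ u) ⬝ᵥ (B *ᵥ u) = 1 / (1 - Y p ⬝ᵥ (D *ᵥ Y p)) := by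
  classical
  -- invertibility of 1 + Ystᵀ Yst
  have hpos : (1 + Ystᵀ * Yst).PosDef := by
    have h1 : (1 : Matrix (Fin d) (Fin d) ℝ).PosDef := Matrix.PosDef.one
    have h2 : (Ystᵀ * Yst).PosSemidef := by
      have := Matrix.posSemidef_conjTranspose_mul_self Yst
      rwa [Matrix.conjTranspose_eq_transpose_of_trivial] at this
    exact h1.add_posSemidef h2
  have hunit : IsUnit (1 + Ystᵀ * Yst).det := hpos.det_pos.ne'.isUnit
  have hDl : D * (1 + Ystᵀ * Yst) = 1 := by rw [hD]; exact Matrix.nonsing_inv_mul _ hunit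
  -- setup
  set v : {i // i ∈ A} → ℝ := fun i => u i.1 with hv
  set S : Matrix {i // i ∈ A} {i // i ∈ A} ℝ := 1 + Yst * Ystᵀ with hSdef
  set W : Matrix {i // i ∈ A} {i // i ∈ A} ℝ := 1 - Yst * D * Ystᵀ with hWdef
  have hWS : W * S = 1 := by
    have key : Yst * D * Ystᵀ + Yst * D * Ystᵀ * (Yst * Ystᵀ) = Yst * Ystᵀ := by
      have : Yst * D * Ystᵀ + Yst * D * Ystᵀ * (Yst * Ystᵀ)
          = Yst * (D * (1 + Ystᵀ * Yst)) * Ystᵀ := by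
        simp only [Matrix.mul_add, Matrix.add_mul, Matrix.mul_one, Matrix.one_mul,
          Matrix.mul_assoc]
      rw [this, hDl, Matrix.mul_one]
    have expand : W * S = 1 + Yst * Ystᵀ - (Yst * D * Ystᵀ + Yst * D * Ystᵀ * (Yst * Ystᵀ)) := by
      rw [hWdef, hSdef]; noncomm_ring
    rw [expand, key]; abel
  set p' : {i // i ∈ A} := ⟨p, hp⟩ with hp'
  -- (S v) i' equals column i' ⬝ Bu
  have hcol : ∀ i' : {i // i ∈ A},
      (S *ᵥ v) i' = (fun k => B k i'.1) ⬝ᵥ (B *ᵥ u) := by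
    intro i'
    have hBu : ∀ j : Fin d, (B *ᵥ u) (Sum.inr j) = ∑ k' : {i // i ∈ A}, Y k'.1 j * v k' := by
      intro j
      have : (B *ᵥ u) (Sum.inr j) = ∑ k : Fin n, Y k j * u k := by
        simp [hB, Matrix.mulVec, dotProduct]
      rw [this]
      rw [← Finset.sum_subset A.subset_univ (by intro k _ hk; rw [hu0 k hk, mul_zero])]
      rw [← Finset.sum_coe_sort]
    have hBul : ∀ k : Fin n, (B *ᵥ u) (Sum.inl k) = u k := by
      intro k
      simp [hB, Matrix.mulVec, dotProduct, Matrix.one_apply, Finset.sum_ite_eq]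
    calc (S *ᵥ v) i'
        = v i' + ∑ j' : {i // i ∈ A}, (∑ t : Fin d, Yst i' t * Yst j' t) * v j' := by
          simp [hSdef, Matrix.mulVec, dotProduct, Matrix.add_apply, Matrix.mul_apply,
            Matrix.one_apply, add_mul, Finset.sum_add_distrib, Finset.sum_ite_eq']
      _ = u i'.1 + ∑ j : Fin d, Y i'.1 j * ((B *ᵥ u) (Sum.inr j)) := by
          congr 1
          simp only [hBu, hYst, Matrix.of_apply, Finset.mul_sum, Finset.sum_mul]
          rw [Finset.sum_comm]
          exact Finset.sum_congr rfl fun j _ => Finset.sum_congr rfl fun t _ => by ring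
      _ = (fun k => B k i'.1) ⬝ᵥ (B *ᵥ u) := by
          rw [dotProduct, Fintype.sum_sum_type]
          congr 1
          · rw [Finset.sum_congr rfl (fun k _ => by
              rw [hBul k, hB, Matrix.fromRows_apply_inl])]
            simp [Matrix.one_apply, Finset.sum_ite_eq]
          · exact Finset.sum_congr rfl fun j _ => by
              rw [hB, Matrix.fromRows_apply_inr]; simp [mul_comm]
  -- S v = c • single
  set c : ℝ := (S *ᵥ v) p' with hc
  have hSv : S *ᵥ v = Pi.single p' c := by
    funext i'
    by_cases h : i' = p'
    · subst h; simp [hc]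
    · rw [hcol i', huo i'.1 i'.2 (fun he => h (Subtype.ext he))]
      rw [Pi.single_eq_of_ne h]
  -- v = W (S v)
  have hvW : v = fun j' => W j' p' * c := by
    have : W *ᵥ (S *ᵥ v) = v := by
      rw [Matrix.mulVec_mulVec, hWS, Matrix.one_mulVec]
    rw [← this, hSv, Matrix.mulVec_single]
    funext j'; simp [Matrix.col]
  -- identify t
  have htW : W p' p' = 1 - Y p ⬝ᵥ (D *ᵥ Y p) := by
    rw [hWdef]
    simp only [Matrix.sub_apply, Matrix.one_apply_eq]
    congr 1
    simp [Matrix.mul_apply, Matrix.mulVec, dotProduct, hYst, Finset.mul_sum,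
      Finset.sum_mul]
    rw [Finset.sum_comm]
    exact Finset.sum_congr rfl fun j _ => Finset.sum_congr rfl fun t _ => by ring
  have hone : (1 - Y p ⬝ᵥ (D *ᵥ Y p)) * c = 1 := by
    have := congrFun hvW p'
    simp only [hv] at this
    rw [hup] at this
    rw [← htW]; exact this.symm ▸ rfl
  -- Bu ⬝ Bu = c
  have hBuBu : (B *ᵥ u) ⬝ᵥ (B *ᵥ u) = c := by
    have swap : (B *ᵥ u) ⬝ᵥ (B *ᵥ u) = ∑ i : Fin n, u i * ((fun k => B k i) ⬝ᵥ (B *ᵥ u)) := by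
      simp only [dotProduct, Matrix.mulVec, Finset.sum_mul, Finset.mul_sum]
      rw [Finset.sum_comm]
      exact Finset.sum_congr rfl fun i _ => Finset.sum_congr rfl fun k _ =>
        Finset.sum_congr rfl fun x _ => by ring
    rw [swap]
    rw [Finset.sum_eq_single_of_mem p (Finset.mem_univ p)]
    · rw [hup, one_mul, ← hcol p']
    · intro i _ hip
      by_cases hiA : i ∈ A
      · rw [huo i hiA hip, mul_zero]
      · rw [hu0 i hiA, zero_mul]
  have hne : (1 - Y p ⬝ᵥ (D *ᵥ Y p)) ≠ 0 := left_ne_zero_of_mul_eq_one hone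
  rw [hBuBu]
  field_simp
  linarith [hone]
end

section
/- In the setting above, if additionally max_{i∈[n]} ‖y_i‖ ≤ ζ, then 1 ≤ ‖Bu‖² ≤ 1 + ζ²(1+ζ²). -/
open Matrix

/-- Bounds `1 ≤ ‖Bu‖² ≤ 1 + ζ²(1+ζ²)` for the Gram–Schmidt step direction `u`
when the rows of `Y` have Euclidean norm at most `ζ`. -/
theorem gsw_norm_Bu_sq_bounds (n d : ℕ) (Y : Matrix (Fin n) (Fin d) ℝ) (ζ : ℝ)
    (hrow : ∀ i, Real.sqrt (Y i ⬝ᵥ Y i) ≤ ζ)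
    (B : Matrix (Fin n ⊕ Fin d) (Fin n) ℝ) (hB : B = Matrix.fromRows 1 Yᵀ)
    (A : Finset (Fin n)) (hA : A.Nonempty) (p : Fin n) (hp : p ∈ A)
    (u : Fin n → ℝ) (hu0 : ∀ i, i ∉ A → u i = 0) (hup : u p = 1)
    (huo : ∀ i ∈ A, i ≠ p → (fun k => B k i) ⬝ᵥ (B *ᵥ u) = 0) :
    1 ≤ (B *ᵥ u) ⬝ᵥ (B *ᵥ u) ∧
      (B *ᵥ u) ⬝ᵥ (B *ᵥ u) ≤ 1 + ζ ^ 2 * (1 + ζ ^ 2) := by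
  set v := B *ᵥ u with hv
  have hζ : (0:ℝ) ≤ ζ := le_trans (Real.sqrt_nonneg _) (hrow p)
  have hyp0 : 0 ≤ Y p ⬝ᵥ Y p := by
    unfold dotProduct
    exact Finset.sum_nonneg fun j _ => mul_self_nonneg (Y p j)
  have hyp2 : Y p ⬝ᵥ Y p ≤ ζ ^ 2 := by
    nlinarith [hrow p, Real.sq_sqrt hyp0, Real.sqrt_nonneg (Y p ⬝ᵥ Y p)]
  -- components of v
  have hvl : ∀ i : Fin n, v (Sum.inl i) = u i := by
    intro i
    simp [hv, hB, mulVec, dotProduct, Matrix.one_apply]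
  -- lower bound
  have hlow : 1 ≤ v ⬝ᵥ v := by
    have hsplit : v ⬝ᵥ v =
        (∑ i : Fin n, v (Sum.inl i) * v (Sum.inl i)) +
        (∑ j : Fin d, v (Sum.inr j) * v (Sum.inr j)) := by
      simp [dotProduct, Fintype.sum_sum_type]
    have h1 : (1:ℝ) ≤ ∑ i : Fin n, v (Sum.inl i) * v (Sum.inl i) := by
      have hle := Finset.single_le_sum
        (f := fun i : Fin n => v (Sum.inl i) * v (Sum.inl i))
        (fun i _ => mul_self_nonneg _) (Finset.mem_univ p)
      simpa [hvl p, hup] using hle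
    have h2 : (0:ℝ) ≤ ∑ j : Fin d, v (Sum.inr j) * v (Sum.inr j) :=
      Finset.sum_nonneg fun j _ => mul_self_nonneg _
    rw [hsplit]; linarith
  -- key identity : v ⬝ᵥ v = (col p) ⬝ᵥ v
  have hkey : v ⬝ᵥ v = (fun k => B k p) ⬝ᵥ v := by
    have h1 : v ⬝ᵥ v = ∑ i : Fin n, u i * ((fun k => B k i) ⬝ᵥ v) := by
      calc v ⬝ᵥ v = u ⬝ᵥ (Bᵀ *ᵥ v) := by
            rw [hv, Matrix.mulVec_transpose, dotProduct_comm,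
              Matrix.dotProduct_mulVec, dotProduct_comm]
        _ = ∑ i : Fin n, u i * ((fun k => B k i) ⬝ᵥ v) := by
            simp [dotProduct, mulVec, transpose_apply]
    rw [h1, Finset.sum_eq_single p]
    · rw [hup, one_mul]
    · intro i _ hip
      by_cases hiA : i ∈ A
      · rw [huo i hiA hip, mul_zero]
      · rw [hu0 i hiA, zero_mul]
    · intro h; exact absurd (Finset.mem_univ p) h
  -- column p norm
  have hcol : (∑ k, B k p ^ 2) = 1 + Y p ⬝ᵥ Y p := by
    rw [hB]
    simp [Fintype.sum_sum_type, Matrix.one_apply, dotProduct, sq]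
  -- Cauchy-Schwarz
  have hcs := Finset.sum_mul_sq_le_sq_mul_sq Finset.univ (fun k => B k p) v
  have hdot : (fun k => B k p) ⬝ᵥ v = ∑ k, (fun k => B k p) k * v k := rfl
  have hvsq : v ⬝ᵥ v = ∑ k, v k ^ 2 := by simp [dotProduct, sq]
  have hub : v ⬝ᵥ v ≤ 1 + ζ ^ 2 := by
    have h2 : (v ⬝ᵥ v) ^ 2 ≤ (1 + Y p ⬝ᵥ Y p) * (v ⬝ᵥ v) := by
      calc (v ⬝ᵥ v) ^ 2 = ((fun k => B k p) ⬝ᵥ v) ^ 2 := by rw [hkey]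
        _ ≤ (∑ k, B k p ^ 2) * ∑ k, v k ^ 2 := by rw [hdot]; exact hcs
        _ = (1 + Y p ⬝ᵥ Y p) * (v ⬝ᵥ v) := by rw [hcol, hvsq]
    nlinarith [hlow]
  refine ⟨hlow, ?_⟩
  nlinarith
end

section
/- In the setting above, the step direction vector satisfies u = (1/(1 − y_p^T D y_p)) (e_p − I_n[:,A] Y_⋆ D y_p), where e_p ∈ ℝ^n is the p-th standard basis vector. -/
open Matrix

/-- Explicit formula for the Gram–Schmidt step direction:
`u = (1/(1 - yₚᵀ D yₚ)) (eₚ - Iₙ[:,A] Y⋆ D yₚ)`. -/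
theorem gsw_step_direction_formula (n d : ℕ) (Y : Matrix (Fin n) (Fin d) ℝ)
    (B : Matrix (Fin n ⊕ Fin d) (Fin n) ℝ) (hB : B = Matrix.fromRows 1 Yᵀ)
    (A : Finset (Fin n)) (hA : A.Nonempty) (p : Fin n) (hp : p ∈ A)
    (Yst : Matrix {i // i ∈ A} (Fin d) ℝ) (hYst : Yst = Matrix.of fun i j => Y i.1 j)
    (D : Matrix (Fin d) (Fin d) ℝ) (hD : D = (1 + Ystᵀ * Yst)⁻¹)
    (u : Fin n → ℝ) (hu0 : ∀ i, i ∉ A → u i = 0) (hup : u p = 1)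
    (huo : ∀ i ∈ A, i ≠ p → (fun k => B k i) ⬝ᵥ (B *ᵥ u) = 0) :
    u = (1 / (1 - Y p ⬝ᵥ (D *ᵥ Y p))) •
      (Pi.single p 1 - fun i => if i ∈ A then Y i ⬝ᵥ (D *ᵥ Y p) else 0) := by
  classical
  set M : Matrix (Fin d) (Fin d) ℝ := 1 + Ystᵀ * Yst with hM
  -- M is positive definite, hence invertible
  have hMpd : M.PosDef := by
    refine Matrix.PosDef.add_posSemidef Matrix.PosDef.one ?_
    have := Matrix.posSemidef_conjTranspose_mul_self Yst
    rwa [Matrix.conjTranspose_eq_transpose_of_trivial] at this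
  have hdet : IsUnit M.det := isUnit_iff_ne_zero.mpr (ne_of_gt hMpd.det_pos)
  have hMD : M * D = 1 := by rw [hD]; exact Matrix.mul_nonsing_inv _ hdet
  set z : Fin d → ℝ := D *ᵥ Y p with hz
  have hMz : M *ᵥ z = Y p := by
    rw [hz, Matrix.mulVec_mulVec, hMD, Matrix.one_mulVec]
  have hzexp : Y p = z + Ystᵀ *ᵥ (Yst *ᵥ z) := by
    rw [← hMz, hM, Matrix.add_mulVec, Matrix.one_mulVec, ← Matrix.mulVec_mulVec]
  set t : ℝ := Y p ⬝ᵥ z with ht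
  have hYstz : ∀ i : {i // i ∈ A}, (Yst *ᵥ z) i = Y i.1 ⬝ᵥ z := by
    intro i; simp [Matrix.mulVec, hYst, dotProduct]
  -- expansion of t
  have hq : (Ystᵀ *ᵥ (Yst *ᵥ z)) ⬝ᵥ z = (Yst *ᵥ z) ⬝ᵥ (Yst *ᵥ z) := by
    rw [dotProduct_comm, Matrix.dotProduct_mulVec, Matrix.vecMul_transpose]
  have htexp : t = z ⬝ᵥ z + ∑ i : {i // i ∈ A}, (Y i.1 ⬝ᵥ z) ^ 2 := by
    conv_lhs => rw [ht, hzexp]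
    rw [add_dotProduct, hq]
    congr 1
    rw [dotProduct]
    exact Finset.sum_congr rfl fun i _ => by rw [hYstz i]; ring
  have hsum_nonneg : (0:ℝ) ≤ ∑ i : {i // i ∈ A}, (Y i.1 ⬝ᵥ z) ^ 2 :=
    Finset.sum_nonneg fun i _ => sq_nonneg _
  have hsum_ge : (Y p ⬝ᵥ z) ^ 2 ≤ ∑ i : {i // i ∈ A}, (Y i.1 ⬝ᵥ z) ^ 2 := by
    have : (⟨p, hp⟩ : {i // i ∈ A}) ∈ Finset.univ := Finset.mem_univ _
    exact Finset.single_le_sum (fun i _ => sq_nonneg (Y i.1 ⬝ᵥ z)) this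
  have hzz : (0:ℝ) ≤ z ⬝ᵥ z := Finset.sum_nonneg fun i _ => mul_self_nonneg _
  -- the denominator is nonzero
  have hden : (1:ℝ) - t ≠ 0 := by
    intro h
    have ht1 : t = 1 := by linarith
    have hz0 : z ⬝ᵥ z = 0 := by nlinarith [htexp, hsum_ge]
    have : z = 0 := dotProduct_self_eq_zero.mp hz0
    rw [ht, this, dotProduct_zero] at ht1
    norm_num at ht1
  set c : ℝ := 1 / (1 - t) with hc
  set w : Fin n → ℝ := fun i => if i ∈ A then Y i ⬝ᵥ z else 0 with hw
  set v : Fin n → ℝ := c • (Pi.single p 1 - w) with hv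
  -- the Gram matrix
  set G : Matrix (Fin n) (Fin n) ℝ := 1 + Y * Yᵀ with hG
  -- translate the orthogonality hypothesis
  have hGu : ∀ i ∈ A, i ≠ p → (G *ᵥ u) i = 0 := by
    intro i hi hip
    have := huo i hi hip
    have hcol : (fun k => B k i) = Bᵀ i := rfl
    rw [hcol, show Bᵀ i ⬝ᵥ (B *ᵥ u) = (Bᵀ *ᵥ (B *ᵥ u)) i from rfl,
      Matrix.mulVec_mulVec] at this
    have hBtB : Bᵀ * B = G := by
      rw [hB, Matrix.transpose_fromRows, Matrix.fromCols_mul_fromRows]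
      simp [hG]
    rwa [hBtB] at this
  -- compute Yᵀ *ᵥ w
  have hYtw : Yᵀ *ᵥ w = Ystᵀ *ᵥ (Yst *ᵥ z) := by
    funext j
    have lhs : (Yᵀ *ᵥ w) j = ∑ i ∈ A, Y i j * (Y i ⬝ᵥ z) := by
      simp only [Matrix.mulVec, dotProduct, Matrix.transpose_apply, hw, mul_ite,
        mul_zero]
      exact Fintype.sum_ite_mem A _
    have rhs : (Ystᵀ *ᵥ (Yst *ᵥ z)) j = ∑ i : {i // i ∈ A}, Y i.1 j * (Y i.1 ⬝ᵥ z) := by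
      simp only [Matrix.mulVec, Matrix.transpose_apply]
      refine Finset.sum_congr rfl fun i _ => ?_
      rw [hYstz i, hYst]
      rfl
    rw [lhs, rhs, Finset.sum_coe_sort A (fun i => Y i j * (Y i ⬝ᵥ z))]
  -- compute Yᵀ *ᵥ v
  have hYtv : Yᵀ *ᵥ v = c • z := by
    rw [hv, Matrix.mulVec_smul, Matrix.mulVec_sub, hYtw, Matrix.mulVec_single]
    have h1 : MulOpposite.op (1:ℝ) • Yᵀ.col p = Y p := by funext j; simp
    rw [h1]
    have h2 : Ystᵀ *ᵥ (Yst *ᵥ z) = Y p - z := by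
      rw [hzexp]; funext j; simp
    rw [h2]
    congr 1
    funext j
    simp
  -- value of G *ᵥ v on A
  have hGv : ∀ i ∈ A, (G *ᵥ v) i = if i = p then c else 0 := by
    intro i hi
    have hsplit : (G *ᵥ v) i = v i + Y i ⬝ᵥ (Yᵀ *ᵥ v) := by
      rw [hG, Matrix.add_mulVec, Matrix.one_mulVec, ← Matrix.mulVec_mulVec]
      rfl
    rw [hsplit, hYtv, dotProduct_smul]
    have hvi : v i = c * ((if i = p then (1:ℝ) else 0) - Y i ⬝ᵥ z) := by
      rw [hv]
      simp only [Pi.smul_apply, Pi.sub_apply, smul_eq_mul, hw, if_pos hi,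
        Pi.single_apply]
    rw [hvi]
    by_cases hip : i = p <;> simp [hip, smul_eq_mul] <;> ring
  -- v satisfies the same defining conditions; now show u = v
  have hvp : v p = 1 := by
    have : v p = c * (1 - t) := by
      rw [hv]
      simp only [Pi.smul_apply, Pi.sub_apply, smul_eq_mul, hw, if_pos hp,
        Pi.single_eq_same, ht]
    rw [this, hc]
    field_simp
  have hv0 : ∀ i, i ∉ A → v i = 0 := by
    intro i hiA
    have hip : i ≠ p := fun h => hiA (h ▸ hp)
    rw [hv]
    simp [Pi.single_apply, hip, hw, hiA]
  -- the difference e := u - v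
  set e : Fin n → ℝ := u - v with he
  have hep : e p = 0 := by simp [he, hup, hvp]
  have he0 : ∀ i, i ∉ A → e i = 0 := by
    intro i hi; simp [he, hu0 i hi, hv0 i hi]
  have hGe : ∀ i ∈ A, i ≠ p → (G *ᵥ e) i = 0 := by
    intro i hi hip
    rw [he, Matrix.mulVec_sub]
    have := hGv i hi
    rw [if_neg hip] at this
    simp [hGu i hi hip, this]
  -- e ⬝ᵥ (G *ᵥ e) = 0
  have hquad : e ⬝ᵥ (G *ᵥ e) = 0 := by
    rw [dotProduct]
    refine Finset.sum_eq_zero fun i _ => ?_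
    by_cases hiA : i ∈ A
    · by_cases hip : i = p
      · rw [hip, hep, zero_mul]
      · rw [hGe i hiA hip, mul_zero]
    · rw [he0 i hiA, zero_mul]
  -- but e ⬝ᵥ (G *ᵥ e) = ‖e‖² + ‖Yᵀe‖²
  have hquad2 : e ⬝ᵥ (G *ᵥ e) = e ⬝ᵥ e + (Yᵀ *ᵥ e) ⬝ᵥ (Yᵀ *ᵥ e) := by
    rw [hG, Matrix.add_mulVec, Matrix.one_mulVec, dotProduct_add]
    congr 1
    rw [← Matrix.mulVec_mulVec, Matrix.dotProduct_mulVec, ← Matrix.mulVec_transpose]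
  have hee : e ⬝ᵥ e = 0 := by
    have h1 : (0:ℝ) ≤ e ⬝ᵥ e := Finset.sum_nonneg fun i _ => mul_self_nonneg _
    have h2 : (0:ℝ) ≤ (Yᵀ *ᵥ e) ⬝ᵥ (Yᵀ *ᵥ e) :=
      Finset.sum_nonneg fun i _ => mul_self_nonneg _
    rw [hquad] at hquad2
    linarith
  have he00 : e = 0 := dotProduct_self_eq_zero.mp hee
  have huv : u = v := sub_eq_zero.mp (he ▸ he00)
  rw [huv, hv, hc, hw, ht, hz]
end

section
/- In the setting above, for any v ∈ ℝ^n with v^T Y = 0, one has ⟨u, v⟩ = ‖Bu‖² · v[A]^T (I_{|A|} − Y_⋆ D Y_⋆^T) e_p[A]. -/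
open Matrix

/-- Inner product formula `⟨u, v⟩ = ‖Bu‖² · v[A]ᵀ (I - Y⋆ D Y⋆ᵀ) eₚ[A]`
for any `v` with `vᵀ Y = 0`. -/
theorem gsw_inner_product_formula (n d : ℕ) (Y : Matrix (Fin n) (Fin d) ℝ)
    (B : Matrix (Fin n ⊕ Fin d) (Fin n) ℝ) (hB : B = Matrix.fromRows 1 Yᵀ)
    (A : Finset (Fin n)) (hA : A.Nonempty) (p : Fin n) (hp : p ∈ A)
    (Yst : Matrix {i // i ∈ A} (Fin d) ℝ) (hYst : Yst = Matrix.of fun i j => Y i.1 j)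
    (D : Matrix (Fin d) (Fin d) ℝ) (hD : D = (1 + Ystᵀ * Yst)⁻¹)
    (u : Fin n → ℝ) (hu0 : ∀ i, i ∉ A → u i = 0) (hup : u p = 1)
    (huo : ∀ i ∈ A, i ≠ p → (fun k => B k i) ⬝ᵥ (B *ᵥ u) = 0)
    (v : Fin n → ℝ) (hv : v ᵥ* Y = 0) :
    u ⬝ᵥ v = ((B *ᵥ u) ⬝ᵥ (B *ᵥ u)) *
      ((fun i : {i // i ∈ A} => v i.1) ⬝ᵥ
        (((1 : Matrix {i // i ∈ A} {i // i ∈ A} ℝ) - Yst * D * Ystᵀ) *ᵥ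
          fun i : {i // i ∈ A} => if i.1 = p then (1 : ℝ) else 0)) := by
  classical
  subst hB hYst hD
  set Yst : Matrix {i // i ∈ A} (Fin d) ℝ := Matrix.of fun i j => Y i.1 j with hYst
  set w : Fin d → ℝ := Yᵀ *ᵥ u with hw
  set uA : {i // i ∈ A} → ℝ := fun i => u i.1 with huA
  set eP : {i // i ∈ A} → ℝ := fun i => if i.1 = p then (1 : ℝ) else 0 with heP
  set P : {i // i ∈ A} := ⟨p, hp⟩ with hP
  set t : ℝ := 1 + (Yst *ᵥ w) P with ht
  set M : Matrix (Fin d) (Fin d) ℝ := 1 + Ystᵀ * Yst with hM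
  -- orthogonality in coordinates
  have hkey : ∀ i : {i // i ∈ A}, i.1 ≠ p → u i.1 + (Yst *ᵥ w) i = 0 := by
    intro i hip
    have := huo i.1 i.2 hip
    simpa [hw, hYst, Matrix.fromRows_mulVec, Matrix.one_mulVec, dotProduct,
      Fintype.sum_sum_type, Matrix.fromRows_apply_inl, Matrix.fromRows_apply_inr,
      Matrix.one_apply, Matrix.transpose_apply, Matrix.mulVec, Finset.sum_ite_eq',
      mul_comm] using this
  -- w in terms of uA
  have hwA : w = Ystᵀ *ᵥ uA := by
    funext j
    rw [hw]
    show (∑ i : Fin n, Yᵀ j i * u i) = ∑ i : {i // i ∈ A}, Ystᵀ j i * uA i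
    rw [show (∑ i : Fin n, Yᵀ j i * u i) = ∑ i ∈ A, Yᵀ j i * u i from
      (Finset.sum_subset (Finset.subset_univ A) (by
        intro x _ hx; rw [hu0 x hx, mul_zero])).symm]
    rw [← Finset.sum_attach A (fun i => Yᵀ j i * u i)]
    simp [hYst, huA, Matrix.transpose_apply]
  -- coordinates of uA
  have huAeq : uA = fun i => t * eP i - (Yst *ᵥ w) i := by
    funext i
    by_cases h : i.1 = p
    · have hiP : i = P := Subtype.ext h
      subst hiP
      simp [huA, heP, hup, ht, hP]
    · have := hkey i h
      simp only [huA, heP, if_neg h]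
      linarith
  have huAvec : uA = t • eP - Yst *ᵥ w := by
    rw [huAeq]; funext i; simp [smul_eq_mul]
  -- invertibility of M
  have hMpd : M.PosDef := by
    rw [hM]
    refine Matrix.PosDef.add_posSemidef Matrix.PosDef.one ?_
    have := Matrix.posSemidef_conjTranspose_mul_self Yst
    rwa [Matrix.conjTranspose_eq_transpose_of_trivial] at this
  have hdet : IsUnit M.det := hMpd.det_pos.ne'.isUnit
  have hDM : M⁻¹ * M = 1 := Matrix.nonsing_inv_mul M hdet
  -- the equation M w = t • Ystᵀ eP
  have heq : w = t • (Ystᵀ *ᵥ eP) - Ystᵀ *ᵥ (Yst *ᵥ w) := by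
    have h : Ystᵀ *ᵥ uA = Ystᵀ *ᵥ (t • eP - Yst *ᵥ w) := by rw [← huAvec]
    rw [Matrix.mulVec_sub, Matrix.mulVec_smul] at h
    nth_rewrite 1 [hwA]
    exact h
  have hwM : M *ᵥ w = t • (Ystᵀ *ᵥ eP) := by
    rw [hM, Matrix.add_mulVec, Matrix.one_mulVec, ← Matrix.mulVec_mulVec]
    nth_rewrite 1 [heq]
    abel
  -- solve for w
  have hwD : w = t • (M⁻¹ *ᵥ (Ystᵀ *ᵥ eP)) := by
    have h := congrArg (fun x => M⁻¹ *ᵥ x) hwM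
    simpa [Matrix.mulVec_mulVec, hDM, Matrix.one_mulVec, Matrix.mulVec_smul] using h
  -- final coordinate formula for uA
  have huA2 : uA = fun i => t * (((1 - Yst * M⁻¹ * Ystᵀ) *ᵥ eP) i) := by
    funext i
    rw [huAeq]
    have hcoord : ((1 - Yst * M⁻¹ * Ystᵀ) *ᵥ eP) i
        = eP i - (Yst *ᵥ (M⁻¹ *ᵥ (Ystᵀ *ᵥ eP))) i := by
      rw [Matrix.sub_mulVec, Matrix.one_mulVec, ← Matrix.mulVec_mulVec,
        ← Matrix.mulVec_mulVec]
      simp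
    rw [hcoord, hwD]
    simp [Matrix.mulVec_smul, smul_eq_mul]
    ring
  -- norm identity: ‖Bu‖² = u·u + w·w
  have hnorm : (Matrix.fromRows (1 : Matrix (Fin n) (Fin n) ℝ) Yᵀ *ᵥ u) ⬝ᵥ (Matrix.fromRows (1 : Matrix (Fin n) (Fin n) ℝ) Yᵀ *ᵥ u)
      = u ⬝ᵥ u + w ⬝ᵥ w := by
    rw [Matrix.fromRows_mulVec, Matrix.one_mulVec, ← hw]
    simp [dotProduct, Fintype.sum_sum_type]
  have huu : u ⬝ᵥ u = uA ⬝ᵥ uA := by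
    rw [show u ⬝ᵥ u = ∑ i ∈ A, u i * u i from
      (Finset.sum_subset (Finset.subset_univ A) (by
        intro x _ hx; rw [hu0 x hx, mul_zero])).symm]
    rw [← Finset.sum_attach A (fun i => u i * u i)]
    rfl
  have huAuA : uA ⬝ᵥ uA = t - w ⬝ᵥ w := by
    nth_rewrite 2 [huAeq]
    have hsplit : uA ⬝ᵥ (fun i => t * eP i - (Yst *ᵥ w) i)
        = t * (uA ⬝ᵥ eP) - uA ⬝ᵥ (Yst *ᵥ w) := by
      simp only [dotProduct, Finset.mul_sum, ← Finset.sum_sub_distrib]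
      apply Finset.sum_congr rfl
      intro i _; ring
    rw [hsplit]
    have h1 : uA ⬝ᵥ eP = 1 := by
      have hif : ∀ i : {i // i ∈ A}, (if (i : Fin n) = p then (1:ℝ) else 0)
          = if i = P then 1 else 0 := by
        intro i; simp [hP, Subtype.ext_iff]
      simp [dotProduct, heP, hif, mul_ite, mul_one, mul_zero, Finset.sum_ite_eq',
        huA, hP, hup]
    have h2 : uA ⬝ᵥ (Yst *ᵥ w) = w ⬝ᵥ w := by
      rw [Matrix.dotProduct_mulVec]
      have hvm : uA ᵥ* Yst = w := by
        rw [hwA, Matrix.mulVec_transpose]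
      rw [hvm]
    rw [h1, h2]; ring
  have hteq : (Matrix.fromRows (1 : Matrix (Fin n) (Fin n) ℝ) Yᵀ *ᵥ u) ⬝ᵥ (Matrix.fromRows (1 : Matrix (Fin n) (Fin n) ℝ) Yᵀ *ᵥ u) = t := by
    rw [hnorm, huu, huAuA]; ring
  -- conclude
  rw [hteq]
  have huv : u ⬝ᵥ v = ∑ i : {i // i ∈ A}, uA i * v i.1 := by
    rw [show u ⬝ᵥ v = ∑ i ∈ A, u i * v i from
      (Finset.sum_subset (Finset.subset_univ A) (by
        intro x _ hx; rw [hu0 x hx, zero_mul])).symm]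
    rw [← Finset.sum_attach A (fun i => u i * v i)]
    rfl
  rw [huv, huA2]
  simp only [dotProduct]
  rw [Finset.mul_sum]
  apply Finset.sum_congr rfl
  intro i _
  ring
end

section
/- Let x_1,…,x_n be real numbers with Σ_{i∈[n]} x_i = 0, let a ∈ [n] with n ≥ 4, let A be a uniformly random size-a subset of [n], and W = Σ_{i∈A} x_i. Then E[W⁴] = (3(a)_2(n−a)_2/(n)_4)(Σ_i x_i²)² + (a(n−a)/(n)_2)(1 − 6(a−1)(n−a−1)/((n−2)(n−3))) Σ_i x_i⁴, where (m)_k = m(m−1)···(m−k+1). -/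
open Matrix

namespace SworAux
open Finset

variable {γ : Type*} [DecidableEq γ]

lemma L1 (A : Finset γ) (x : γ → ℝ) :
    ∑ i ∈ A, ∑ j ∈ A.erase i, x i ^ 3 * x j
      = (∑ i ∈ A, x i ^ 3) * (∑ i ∈ A, x i) - ∑ i ∈ A, x i ^ 4 := by
  have h : ∀ i ∈ A, ∑ j ∈ A.erase i, x i ^ 3 * x j
      = x i ^ 3 * (∑ j ∈ A, x j) - x i ^ 4 := by
    intro i hi
    rw [← Finset.mul_sum, Finset.sum_erase_eq_sub hi, mul_sub]
    ring_nf
  rw [Finset.sum_congr rfl h, Finset.sum_sub_distrib, ← Finset.sum_mul]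

lemma L2 (A : Finset γ) (x : γ → ℝ) :
    ∑ i ∈ A, ∑ j ∈ A.erase i, x i ^ 2 * x j ^ 2
      = (∑ i ∈ A, x i ^ 2) * (∑ i ∈ A, x i ^ 2) - ∑ i ∈ A, x i ^ 4 := by
  have h : ∀ i ∈ A, ∑ j ∈ A.erase i, x i ^ 2 * x j ^ 2
      = x i ^ 2 * (∑ j ∈ A, x j ^ 2) - x i ^ 4 := by
    intro i hi
    rw [← Finset.mul_sum, Finset.sum_erase_eq_sub hi, mul_sub]
    ring_nf
  rw [Finset.sum_congr rfl h, Finset.sum_sub_distrib, ← Finset.sum_mul]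

lemma L3 (A : Finset γ) (x : γ → ℝ) :
    ∑ i ∈ A, ∑ j ∈ A.erase i, ∑ k ∈ (A.erase i).erase j, x i ^ 2 * (x j * x k)
      = (∑ i ∈ A, x i ^ 2) * (∑ i ∈ A, x i) ^ 2 - (∑ i ∈ A, x i ^ 2) ^ 2
        - 2 * ((∑ i ∈ A, x i ^ 3) * (∑ i ∈ A, x i)) + 2 * ∑ i ∈ A, x i ^ 4 := by
  have hk : ∀ i ∈ A, ∑ j ∈ A.erase i, ∑ k ∈ (A.erase i).erase j, x i ^ 2 * (x j * x k)
      = (x i ^ 2 * ((∑ m ∈ A, x m) - x i)) * ((∑ m ∈ A, x m) - x i)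
        - x i ^ 2 * ((∑ m ∈ A, x m ^ 2) - x i ^ 2) := by
    intro i hi
    have h1 : ∀ j ∈ A.erase i, ∑ k ∈ (A.erase i).erase j, x i ^ 2 * (x j * x k)
        = (x i ^ 2 * ((∑ m ∈ A, x m) - x i)) * x j - x i ^ 2 * x j ^ 2 := by
      intro j hj
      rw [← Finset.mul_sum, ← Finset.mul_sum, Finset.sum_erase_eq_sub hj,
        Finset.sum_erase_eq_sub hi]
      ring
    rw [Finset.sum_congr rfl h1, Finset.sum_sub_distrib, ← Finset.mul_sum, ← Finset.mul_sum,
      Finset.sum_erase_eq_sub hi, Finset.sum_erase_eq_sub hi]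
  rw [Finset.sum_congr rfl hk]
  have h2 : ∀ i ∈ A, (x i ^ 2 * ((∑ m ∈ A, x m) - x i)) * ((∑ m ∈ A, x m) - x i)
        - x i ^ 2 * ((∑ m ∈ A, x m ^ 2) - x i ^ 2)
      = ((∑ m ∈ A, x m) ^ 2 - (∑ m ∈ A, x m ^ 2)) * x i ^ 2
        - (2 * (∑ m ∈ A, x m)) * x i ^ 3 + 2 * x i ^ 4 := by
    intro i _; ring
  rw [Finset.sum_congr rfl h2]
  simp only [Finset.sum_add_distrib, Finset.sum_sub_distrib, ← Finset.mul_sum]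
  ring

lemma L4 (A : Finset γ) (x : γ → ℝ) :
    ∑ i ∈ A, ∑ j ∈ A.erase i, ∑ k ∈ (A.erase i).erase j,
        ∑ l ∈ ((A.erase i).erase j).erase k, x i * (x j * (x k * x l))
      = (∑ i ∈ A, x i) ^ 4 - 6 * ((∑ i ∈ A, x i ^ 2) * (∑ i ∈ A, x i) ^ 2)
        + 3 * (∑ i ∈ A, x i ^ 2) ^ 2 + 8 * ((∑ i ∈ A, x i ^ 3) * (∑ i ∈ A, x i))
        - 6 * ∑ i ∈ A, x i ^ 4 := by
  have hk : ∀ i ∈ A, ∀ j ∈ A.erase i,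
      ∑ k ∈ (A.erase i).erase j, ∑ l ∈ ((A.erase i).erase j).erase k, x i * (x j * (x k * x l))
      = (x i * x j * ((∑ m ∈ A, x m) - x i - x j)) * ((∑ m ∈ A, x m) - x i - x j)
        - (x i * x j) * ((∑ m ∈ A, x m ^ 2) - x i ^ 2 - x j ^ 2) := by
    intro i hi j hj
    have h1 : ∀ k ∈ (A.erase i).erase j,
        ∑ l ∈ ((A.erase i).erase j).erase k, x i * (x j * (x k * x l))
        = (x i * x j * ((∑ m ∈ A, x m) - x i - x j)) * x k - (x i * x j) * x k ^ 2 := by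
      intro k hk
      rw [← Finset.mul_sum, ← Finset.mul_sum, ← Finset.mul_sum, Finset.sum_erase_eq_sub hk,
        Finset.sum_erase_eq_sub hj, Finset.sum_erase_eq_sub hi]
      ring
    rw [Finset.sum_congr rfl h1, Finset.sum_sub_distrib, ← Finset.mul_sum, ← Finset.mul_sum,
      Finset.sum_erase_eq_sub hj, Finset.sum_erase_eq_sub hi,
      Finset.sum_erase_eq_sub hj, Finset.sum_erase_eq_sub hi]
  have hj2 : ∀ i ∈ A, ∑ j ∈ A.erase i, ∑ k ∈ (A.erase i).erase j,
        ∑ l ∈ ((A.erase i).erase j).erase k, x i * (x j * (x k * x l))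
      = (x i * (((∑ m ∈ A, x m) - x i) ^ 2 - (∑ m ∈ A, x m ^ 2) + x i ^ 2))
          * ((∑ m ∈ A, x m) - x i)
        - (2 * ((∑ m ∈ A, x m) - x i) * x i) * ((∑ m ∈ A, x m ^ 2) - x i ^ 2)
        + 2 * (x i * ((∑ m ∈ A, x m ^ 3) - x i ^ 3)) := by
    intro i hi
    rw [Finset.sum_congr rfl (hk i hi)]
    have h2 : ∀ j ∈ A.erase i,
        (x i * x j * ((∑ m ∈ A, x m) - x i - x j)) * ((∑ m ∈ A, x m) - x i - x j)
          - (x i * x j) * ((∑ m ∈ A, x m ^ 2) - x i ^ 2 - x j ^ 2)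
        = (x i * (((∑ m ∈ A, x m) - x i) ^ 2 - (∑ m ∈ A, x m ^ 2) + x i ^ 2)) * x j
          - (2 * ((∑ m ∈ A, x m) - x i) * x i) * x j ^ 2 + 2 * (x i * x j ^ 3) := by
      intro j _; ring
    rw [Finset.sum_congr rfl h2]
    simp only [Finset.sum_add_distrib, Finset.sum_sub_distrib, ← Finset.mul_sum]
    rw [Finset.sum_erase_eq_sub hi, Finset.sum_erase_eq_sub hi, Finset.sum_erase_eq_sub hi]
  rw [Finset.sum_congr rfl hj2]
  have h3 : ∀ i ∈ A,
      (x i * (((∑ m ∈ A, x m) - x i) ^ 2 - (∑ m ∈ A, x m ^ 2) + x i ^ 2))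
          * ((∑ m ∈ A, x m) - x i)
        - (2 * ((∑ m ∈ A, x m) - x i) * x i) * ((∑ m ∈ A, x m ^ 2) - x i ^ 2)
        + 2 * (x i * ((∑ m ∈ A, x m ^ 3) - x i ^ 3))
      = ((∑ m ∈ A, x m) ^ 3 - 3 * ((∑ m ∈ A, x m) * (∑ m ∈ A, x m ^ 2))
            + 2 * (∑ m ∈ A, x m ^ 3)) * x i
        + (3 * (∑ m ∈ A, x m ^ 2) - 3 * (∑ m ∈ A, x m) ^ 2) * x i ^ 2
        + (6 * (∑ m ∈ A, x m)) * x i ^ 3 - 6 * x i ^ 4 := by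
    intro i _; ring
  rw [Finset.sum_congr rfl h3]
  simp only [Finset.sum_add_distrib, Finset.sum_sub_distrib, ← Finset.mul_sum]
  ring


lemma ind_sum {γ : Type*} [DecidableEq γ] (s A : Finset γ) (g : γ → ℝ) :
    ∑ x ∈ s ∩ A, g x = ∑ x ∈ s, (if x ∈ A then (1:ℝ) else 0) * g x := by
  rw [← Finset.sum_ite_mem]
  simp [ite_mul]

lemma ind_sum2 {γ : Type*} [DecidableEq γ] (s A t : Finset γ) (h : t = s ∩ A) (g : γ → ℝ) :
    ∑ x ∈ t, g x = ∑ x ∈ s, (if x ∈ A then (1:ℝ) else 0) * g x := by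
  rw [h]; exact ind_sum s A g

variable {m : ℕ}

lemma swap1 (a : ℕ) (f : Fin m → ℝ) :
    ∑ A ∈ powersetCard a (univ : Finset (Fin m)), ∑ i ∈ A, f i
    = ∑ i, (((powersetCard a (univ : Finset (Fin m))).filter
        fun A => ({i} : Finset (Fin m)) ⊆ A).card : ℝ) * f i := by
  have step : ∀ A ∈ powersetCard a (univ : Finset (Fin m)),
      ∑ i ∈ A, f i
      = ∑ i, (if ({i} : Finset (Fin m)) ⊆ A then (1:ℝ) else 0) * f i := by
    intro A _
    have h1 := ind_sum univ A f
    rw [univ_inter] at h1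
    rw [h1]
    refine Finset.sum_congr rfl fun i _ => ?_
    by_cases hi : i ∈ A <;> simp [hi]
  rw [Finset.sum_congr rfl step, Finset.sum_comm]
  refine Finset.sum_congr rfl fun i _ => ?_
  rw [← Finset.sum_mul, Finset.sum_boole]

lemma swap2 (a : ℕ) (f : Fin m → Fin m → ℝ) :
    ∑ A ∈ powersetCard a (univ : Finset (Fin m)), ∑ i ∈ A, ∑ j ∈ A.erase i, f i j
    = ∑ i, ∑ j ∈ (univ : Finset (Fin m)).erase i,
        (((powersetCard a (univ : Finset (Fin m))).filter
          fun A => ({i, j} : Finset (Fin m)) ⊆ A).card : ℝ) * f i j := by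
  have step : ∀ A ∈ powersetCard a (univ : Finset (Fin m)),
      ∑ i ∈ A, ∑ j ∈ A.erase i, f i j
      = ∑ i, ∑ j ∈ (univ : Finset (Fin m)).erase i,
          (if ({i, j} : Finset (Fin m)) ⊆ A then (1:ℝ) else 0) * f i j := by
    intro A _
    have h1 := ind_sum univ A (fun i => ∑ j ∈ A.erase i, f i j)
    rw [univ_inter] at h1
    rw [h1]
    refine Finset.sum_congr rfl fun i _ => ?_
    have h2 : (univ : Finset (Fin m)).erase i ∩ A = A.erase i := by
      ext y; simp [and_comm]
    rw [← h2, ind_sum ((univ : Finset (Fin m)).erase i) A (f i), Finset.mul_sum]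
    refine Finset.sum_congr rfl fun j _ => ?_
    by_cases hi : i ∈ A <;> by_cases hj : j ∈ A <;>
      simp [hi, hj, Finset.insert_subset_iff]
  rw [Finset.sum_congr rfl step, Finset.sum_comm]
  refine Finset.sum_congr rfl fun i _ => ?_
  rw [Finset.sum_comm]
  refine Finset.sum_congr rfl fun j _ => ?_
  rw [← Finset.sum_mul, Finset.sum_boole]

lemma swap3 (a : ℕ) (f : Fin m → Fin m → Fin m → ℝ) :
    ∑ A ∈ powersetCard a (univ : Finset (Fin m)), ∑ i ∈ A, ∑ j ∈ A.erase i,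
        ∑ k ∈ (A.erase i).erase j, f i j k
    = ∑ i, ∑ j ∈ (univ : Finset (Fin m)).erase i,
        ∑ k ∈ (((univ : Finset (Fin m)).erase i).erase j),
        (((powersetCard a (univ : Finset (Fin m))).filter
          fun A => ({i, j, k} : Finset (Fin m)) ⊆ A).card : ℝ) * f i j k := by
  have step : ∀ A ∈ powersetCard a (univ : Finset (Fin m)),
      ∑ i ∈ A, ∑ j ∈ A.erase i, ∑ k ∈ (A.erase i).erase j, f i j k
      = ∑ i, ∑ j ∈ (univ : Finset (Fin m)).erase i,
          ∑ k ∈ (((univ : Finset (Fin m)).erase i).erase j),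
          (if ({i, j, k} : Finset (Fin m)) ⊆ A then (1:ℝ) else 0) * f i j k := by
    intro A _
    have h1 := ind_sum univ A (fun i => ∑ j ∈ A.erase i, ∑ k ∈ (A.erase i).erase j, f i j k)
    rw [univ_inter] at h1
    rw [h1]
    refine Finset.sum_congr rfl fun i _ => ?_
    have h2 : (univ : Finset (Fin m)).erase i ∩ A = A.erase i := by
      ext y; simp [and_comm]
    rw [ind_sum2 ((univ : Finset (Fin m)).erase i) A (A.erase i) h2.symm
      (fun j => ∑ k ∈ (A.erase i).erase j, f i j k), Finset.mul_sum]
    refine Finset.sum_congr rfl fun j _ => ?_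
    have h3 : ((univ : Finset (Fin m)).erase i).erase j ∩ A = (A.erase i).erase j := by
      ext y; simp
    rw [ind_sum2 (((univ : Finset (Fin m)).erase i).erase j) A ((A.erase i).erase j)
      h3.symm (f i j), Finset.mul_sum, Finset.mul_sum]
    refine Finset.sum_congr rfl fun k _ => ?_
    by_cases hi : i ∈ A <;> by_cases hj : j ∈ A <;> by_cases hk : k ∈ A <;>
      simp [hi, hj, hk, Finset.insert_subset_iff]
  rw [Finset.sum_congr rfl step, Finset.sum_comm]
  refine Finset.sum_congr rfl fun i _ => ?_
  rw [Finset.sum_comm]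
  refine Finset.sum_congr rfl fun j _ => ?_
  rw [Finset.sum_comm]
  refine Finset.sum_congr rfl fun k _ => ?_
  rw [← Finset.sum_mul, Finset.sum_boole]

lemma swap4 (a : ℕ) (f : Fin m → Fin m → Fin m → Fin m → ℝ) :
    ∑ A ∈ powersetCard a (univ : Finset (Fin m)), ∑ i ∈ A, ∑ j ∈ A.erase i,
        ∑ k ∈ (A.erase i).erase j, ∑ l ∈ ((A.erase i).erase j).erase k, f i j k l
    = ∑ i, ∑ j ∈ (univ : Finset (Fin m)).erase i,
        ∑ k ∈ (((univ : Finset (Fin m)).erase i).erase j),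
        ∑ l ∈ ((((univ : Finset (Fin m)).erase i).erase j).erase k),
        (((powersetCard a (univ : Finset (Fin m))).filter
          fun A => ({i, j, k, l} : Finset (Fin m)) ⊆ A).card : ℝ) * f i j k l := by
  have step : ∀ A ∈ powersetCard a (univ : Finset (Fin m)),
      ∑ i ∈ A, ∑ j ∈ A.erase i, ∑ k ∈ (A.erase i).erase j,
          ∑ l ∈ ((A.erase i).erase j).erase k, f i j k l
      = ∑ i, ∑ j ∈ (univ : Finset (Fin m)).erase i,
          ∑ k ∈ (((univ : Finset (Fin m)).erase i).erase j),
          ∑ l ∈ ((((univ : Finset (Fin m)).erase i).erase j).erase k),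
          (if ({i, j, k, l} : Finset (Fin m)) ⊆ A then (1:ℝ) else 0) * f i j k l := by
    intro A _
    have h1 := ind_sum univ A (fun i => ∑ j ∈ A.erase i, ∑ k ∈ (A.erase i).erase j,
      ∑ l ∈ ((A.erase i).erase j).erase k, f i j k l)
    rw [univ_inter] at h1
    rw [h1]
    refine Finset.sum_congr rfl fun i _ => ?_
    have h2 : (univ : Finset (Fin m)).erase i ∩ A = A.erase i := by
      ext y; simp [and_comm]
    rw [ind_sum2 ((univ : Finset (Fin m)).erase i) A (A.erase i) h2.symm
      (fun j => ∑ k ∈ (A.erase i).erase j, ∑ l ∈ ((A.erase i).erase j).erase k, f i j k l),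
      Finset.mul_sum]
    refine Finset.sum_congr rfl fun j _ => ?_
    have h3 : ((univ : Finset (Fin m)).erase i).erase j ∩ A = (A.erase i).erase j := by
      ext y; simp
    rw [ind_sum2 (((univ : Finset (Fin m)).erase i).erase j) A ((A.erase i).erase j) h3.symm
      (fun k => ∑ l ∈ ((A.erase i).erase j).erase k, f i j k l),
      Finset.mul_sum, Finset.mul_sum]
    refine Finset.sum_congr rfl fun k _ => ?_
    have h4 : (((univ : Finset (Fin m)).erase i).erase j).erase k ∩ A
        = ((A.erase i).erase j).erase k := by
      ext y; simp
    rw [ind_sum2 ((((univ : Finset (Fin m)).erase i).erase j).erase k) A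
      (((A.erase i).erase j).erase k) h4.symm (f i j k),
      Finset.mul_sum, Finset.mul_sum, Finset.mul_sum]
    refine Finset.sum_congr rfl fun l _ => ?_
    by_cases hi : i ∈ A <;> by_cases hj : j ∈ A <;> by_cases hk : k ∈ A <;>
      by_cases hl : l ∈ A <;> simp [hi, hj, hk, hl, Finset.insert_subset_iff]
  rw [Finset.sum_congr rfl step, Finset.sum_comm]
  refine Finset.sum_congr rfl fun i _ => ?_
  rw [Finset.sum_comm]
  refine Finset.sum_congr rfl fun j _ => ?_
  rw [Finset.sum_comm]
  refine Finset.sum_congr rfl fun k _ => ?_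
  rw [Finset.sum_comm]
  refine Finset.sum_congr rfl fun l _ => ?_
  rw [← Finset.sum_mul, Finset.sum_boole]


lemma count_superset {m : ℕ} (a : ℕ) (S : Finset (Fin m)) (hS : S.card ≤ a) :
    ((powersetCard a (univ : Finset (Fin m))).filter fun A => S ⊆ A).card
      = (m - S.card).choose (a - S.card) := by
  have hcard : ((univ : Finset (Fin m)) \ S).card = m - S.card := by
    rw [card_sdiff_of_subset (subset_univ S), card_univ, Fintype.card_fin]
  rw [← hcard, ← Finset.card_powersetCard (a - S.card) ((univ : Finset (Fin m)) \ S)]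
  apply Finset.card_bij' (fun A _ => A \ S) (fun B _ => B ∪ S)
  · intro A hA
    simp only [mem_filter, mem_powersetCard] at hA
    simp only [mem_powersetCard]
    exact ⟨sdiff_subset_sdiff hA.1.1 le_rfl,
      by rw [card_sdiff_of_subset hA.2, hA.1.2]⟩
  · intro B hB
    simp only [mem_powersetCard] at hB
    simp only [mem_filter, mem_powersetCard]
    have hBS : Disjoint B S := disjoint_of_subset_left hB.1 (sdiff_disjoint)
    refine ⟨⟨subset_univ _, ?_⟩, subset_union_right⟩
    rw [card_union_of_disjoint hBS, hB.2]
    omega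
  · intro A hA
    simp only [mem_filter] at hA
    rw [sdiff_union_of_subset hA.2]
  · intro B hB
    simp only [mem_powersetCard] at hB
    have hBS : Disjoint B S := disjoint_of_subset_left hB.1 (sdiff_disjoint)
    rw [union_sdiff_right, sdiff_eq_self_of_disjoint hBS]

lemma countN {m : ℕ} (a : ℕ) (ham : a ≤ m) (S : Finset (Fin m)) :
    ((powersetCard a (univ : Finset (Fin m))).filter fun A => S ⊆ A).card
        * m.descFactorial S.card
      = m.choose a * a.descFactorial S.card := by
  by_cases h : S.card ≤ a
  · rw [count_superset a S h, Nat.descFactorial_eq_factorial_mul_choose,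
      Nat.descFactorial_eq_factorial_mul_choose]
    have key := Nat.choose_mul (n := m) h
    calc (m - S.card).choose (a - S.card) * (Nat.factorial S.card * m.choose S.card)
        = Nat.factorial S.card * (m.choose S.card * (m - S.card).choose (a - S.card)) := by ring
      _ = Nat.factorial S.card * (m.choose a * a.choose S.card) := by rw [← key]
      _ = m.choose a * (Nat.factorial S.card * a.choose S.card) := by ring
  · push_neg at h
    have h1 : (powersetCard a (univ : Finset (Fin m))).filter (fun A => S ⊆ A) = ∅ := by
      rw [Finset.filter_eq_empty_iff]
      intro A hA hSA
      rw [mem_powersetCard] at hA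
      have := Finset.card_le_card hSA
      omega
    rw [h1, Nat.descFactorial_eq_zero_iff_lt.mpr h]
    simp

lemma castDesc1 (m : ℕ) : (m.descFactorial 1 : ℝ) = m := by
  simp

lemma castDesc2 (m : ℕ) : (m.descFactorial 2 : ℝ) = m * (m - 1) :=
  Nat.cast_descFactorial_two ℝ m

lemma castDesc3 (m : ℕ) : (m.descFactorial 3 : ℝ) = m * (m - 1) * (m - 2) := by
  rcases m with _ | _ | k
  · norm_num [Nat.descFactorial]
  · norm_num [Nat.descFactorial]
  · have : (k + 2).descFactorial 3 = k * ((k + 1) * (k + 2)) := by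
      simp [Nat.descFactorial]
    rw [this]
    push_cast
    ring

lemma castDesc4 (m : ℕ) : (m.descFactorial 4 : ℝ) = m * (m - 1) * (m - 2) * (m - 3) := by
  rcases m with _ | _ | _ | k
  · norm_num [Nat.descFactorial]
  · norm_num [Nat.descFactorial]
  · norm_num [Nat.descFactorial]
  · have : (k + 3).descFactorial 4 = k * ((k + 1) * ((k + 2) * (k + 3))) := by
      simp [Nat.descFactorial]
    rw [this]
    push_cast
    ring


lemma countR {m : ℕ} (a : ℕ) (ham : a ≤ m) (S : Finset (Fin m)) :
    (((powersetCard a (univ : Finset (Fin m))).filter fun A => S ⊆ A).card : ℝ)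
      = (m.choose a : ℝ) * (a.descFactorial S.card : ℝ) / (m.descFactorial S.card : ℝ) := by
  have hSm : S.card ≤ m := by
    have := Finset.card_le_card (Finset.subset_univ S)
    simpa using this
  have hne : (m.descFactorial S.card : ℝ) ≠ 0 := by
    have : 0 < m.descFactorial S.card := by
      rcases Nat.eq_zero_or_pos (m.descFactorial S.card) with h | h
      · rw [Nat.descFactorial_eq_zero_iff_lt] at h; omega
      · exact h
    exact_mod_cast this.ne'
  rw [eq_div_iff hne]
  exact_mod_cast countN a ham S

end SworAux

open Finset SworAux in
/-- Fourth moment of `W = ∑_{i∈A} x i` for a uniformly random size-`a` subset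
`A` of `[n]` (with `n ≥ 4`), when `∑ᵢ x i = 0`. -/
theorem swor_fourth_moment (n a : ℕ) (ha1 : 1 ≤ a) (han : a ≤ n) (hn : 4 ≤ n)
    (x : Fin n → ℝ) (hx : ∑ i, x i = 0) :
    (∑ A ∈ Finset.powersetCard a (Finset.univ : Finset (Fin n)), (∑ i ∈ A, x i) ^ 4) /
        (Finset.powersetCard a (Finset.univ : Finset (Fin n))).card =
      (3 * ((a : ℝ) * ((a : ℝ) - 1)) * (((n : ℝ) - a) * ((n : ℝ) - a - 1)) /
          ((n : ℝ) * ((n : ℝ) - 1) * ((n : ℝ) - 2) * ((n : ℝ) - 3))) *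
        (∑ i, x i ^ 2) ^ 2 +
      ((a : ℝ) * ((n : ℝ) - a) / ((n : ℝ) * ((n : ℝ) - 1))) *
        (1 - 6 * ((a : ℝ) - 1) * ((n : ℝ) - a - 1) / (((n : ℝ) - 2) * ((n : ℝ) - 3))) *
        ∑ i, x i ^ 4 := by
  classical
  have hcard : (Finset.powersetCard a (Finset.univ : Finset (Fin n))).card = n.choose a := by
    rw [Finset.card_powersetCard, Finset.card_univ, Fintype.card_fin]
  have hchoose_pos : 0 < n.choose a := Nat.choose_pos han
  have hCne : ((Finset.powersetCard a (Finset.univ : Finset (Fin n))).card : ℝ) ≠ 0 := by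
    rw [hcard]; exact_mod_cast hchoose_pos.ne'
  rw [div_eq_iff hCne]
  -- abbreviations for the weights
  set C : ℝ := (n.choose a : ℝ) with hC
  -- step 1: per-A decomposition
  have key : ∀ A ∈ Finset.powersetCard a (Finset.univ : Finset (Fin n)), (∑ i ∈ A, x i) ^ 4
      = (∑ i ∈ A, ∑ j ∈ A.erase i, ∑ k ∈ (A.erase i).erase j,
           ∑ l ∈ ((A.erase i).erase j).erase k, x i * (x j * (x k * x l)))
        + (6 * (∑ i ∈ A, ∑ j ∈ A.erase i, ∑ k ∈ (A.erase i).erase j, x i ^ 2 * (x j * x k))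
        + (3 * (∑ i ∈ A, ∑ j ∈ A.erase i, x i ^ 2 * x j ^ 2)
        + (4 * (∑ i ∈ A, ∑ j ∈ A.erase i, x i ^ 3 * x j)
        + ∑ i ∈ A, x i ^ 4))) := by
    intro A _
    rw [L4, L3, L2, L1]; ring
  rw [Finset.sum_congr rfl key]
  rw [Finset.sum_add_distrib, Finset.sum_add_distrib, Finset.sum_add_distrib,
    Finset.sum_add_distrib,
    ← Finset.mul_sum (Finset.powersetCard a (Finset.univ : Finset (Fin n)))
      (fun A => ∑ i ∈ A, ∑ j ∈ A.erase i, ∑ k ∈ (A.erase i).erase j, x i ^ 2 * (x j * x k)) 6,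
    ← Finset.mul_sum (Finset.powersetCard a (Finset.univ : Finset (Fin n)))
      (fun A => ∑ i ∈ A, ∑ j ∈ A.erase i, x i ^ 2 * x j ^ 2) 3,
    ← Finset.mul_sum (Finset.powersetCard a (Finset.univ : Finset (Fin n)))
      (fun A => ∑ i ∈ A, ∑ j ∈ A.erase i, x i ^ 3 * x j) 4]
  rw [swap4 a (fun i j k l => x i * (x j * (x k * x l))),
    swap3 a (fun i j k => x i ^ 2 * (x j * x k)),
    swap2 a (fun i j => x i ^ 2 * x j ^ 2),
    swap2 a (fun i j => x i ^ 3 * x j),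
    swap1 a (fun i => x i ^ 4)]
  -- replace weights by constants and pull them out
  have hw1 : ∑ i, (((Finset.powersetCard a (Finset.univ : Finset (Fin n))).filter
        fun A => ({i} : Finset (Fin n)) ⊆ A).card : ℝ) * x i ^ 4
      = C * ((a.descFactorial 1 : ℝ) / (n.descFactorial 1 : ℝ)) * ∑ i, x i ^ 4 := by
    rw [Finset.mul_sum]
    refine Finset.sum_congr rfl fun i _ => ?_
    rw [countR a han, Finset.card_singleton]
    ring
  have hw2 : ∀ g : Fin n → Fin n → ℝ,
      (∑ i, ∑ j ∈ (Finset.univ : Finset (Fin n)).erase i,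
        (((Finset.powersetCard a (Finset.univ : Finset (Fin n))).filter
          fun A => ({i, j} : Finset (Fin n)) ⊆ A).card : ℝ) * g i j)
      = C * ((a.descFactorial 2 : ℝ) / (n.descFactorial 2 : ℝ))
          * ∑ i, ∑ j ∈ (Finset.univ : Finset (Fin n)).erase i, g i j := by
    intro g
    rw [Finset.mul_sum]
    refine Finset.sum_congr rfl fun i _ => ?_
    rw [Finset.mul_sum]
    refine Finset.sum_congr rfl fun j hj => ?_
    rw [Finset.mem_erase] at hj
    have hcard2 : ({i, j} : Finset (Fin n)).card = 2 := by
      rw [Finset.card_insert_of_notMem (by simp [hj.1.symm]), Finset.card_singleton]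
    rw [countR a han, hcard2]
    ring
  have hw3 : ∀ g : Fin n → Fin n → Fin n → ℝ,
      (∑ i, ∑ j ∈ (Finset.univ : Finset (Fin n)).erase i,
        ∑ k ∈ (((Finset.univ : Finset (Fin n)).erase i).erase j),
        (((Finset.powersetCard a (Finset.univ : Finset (Fin n))).filter
          fun A => ({i, j, k} : Finset (Fin n)) ⊆ A).card : ℝ) * g i j k)
      = C * ((a.descFactorial 3 : ℝ) / (n.descFactorial 3 : ℝ))
          * ∑ i, ∑ j ∈ (Finset.univ : Finset (Fin n)).erase i,
              ∑ k ∈ (((Finset.univ : Finset (Fin n)).erase i).erase j), g i j k := by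
    intro g
    rw [Finset.mul_sum]
    refine Finset.sum_congr rfl fun i _ => ?_
    rw [Finset.mul_sum]
    refine Finset.sum_congr rfl fun j hj => ?_
    rw [Finset.mul_sum]
    refine Finset.sum_congr rfl fun k hk => ?_
    rw [Finset.mem_erase] at hj
    rw [Finset.mem_erase, Finset.mem_erase] at hk
    have hcard3 : ({i, j, k} : Finset (Fin n)).card = 3 := by
      rw [Finset.card_insert_of_notMem (by simp [hj.1.symm, hk.2.1.symm]),
        Finset.card_insert_of_notMem (by simp [hk.1.symm]), Finset.card_singleton]
    rw [countR a han, hcard3]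
    ring
  have hw4 : ∀ g : Fin n → Fin n → Fin n → Fin n → ℝ,
      (∑ i, ∑ j ∈ (Finset.univ : Finset (Fin n)).erase i,
        ∑ k ∈ (((Finset.univ : Finset (Fin n)).erase i).erase j),
        ∑ l ∈ ((((Finset.univ : Finset (Fin n)).erase i).erase j).erase k),
        (((Finset.powersetCard a (Finset.univ : Finset (Fin n))).filter
          fun A => ({i, j, k, l} : Finset (Fin n)) ⊆ A).card : ℝ) * g i j k l)
      = C * ((a.descFactorial 4 : ℝ) / (n.descFactorial 4 : ℝ))
          * ∑ i, ∑ j ∈ (Finset.univ : Finset (Fin n)).erase i,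
              ∑ k ∈ (((Finset.univ : Finset (Fin n)).erase i).erase j),
              ∑ l ∈ ((((Finset.univ : Finset (Fin n)).erase i).erase j).erase k),
                g i j k l := by
    intro g
    rw [Finset.mul_sum]
    refine Finset.sum_congr rfl fun i _ => ?_
    rw [Finset.mul_sum]
    refine Finset.sum_congr rfl fun j hj => ?_
    rw [Finset.mul_sum]
    refine Finset.sum_congr rfl fun k hk => ?_
    rw [Finset.mul_sum]
    refine Finset.sum_congr rfl fun l hl => ?_
    rw [Finset.mem_erase] at hj
    rw [Finset.mem_erase, Finset.mem_erase] at hk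
    rw [Finset.mem_erase, Finset.mem_erase, Finset.mem_erase] at hl
    have hcard4 : ({i, j, k, l} : Finset (Fin n)).card = 4 := by
      rw [Finset.card_insert_of_notMem (by simp [hj.1.symm, hk.2.1.symm, hl.2.2.1.symm]),
        Finset.card_insert_of_notMem (by simp [hk.1.symm, hl.2.1.symm]),
        Finset.card_insert_of_notMem (by simp [hl.1.symm]), Finset.card_singleton]
    rw [countR a han, hcard4]
    ring
  rw [hw1, hw2, hw2, hw3, hw4]
  -- evaluate global nested sums
  rw [L4 Finset.univ x, L3 Finset.univ x, L2 Finset.univ x, L1 Finset.univ x, hx]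
  -- cast descending factorials
  rw [castDesc1, castDesc1, castDesc2, castDesc2, castDesc3, castDesc3,
    castDesc4, castDesc4, hcard]
  -- final field computation
  have h4n : (4 : ℝ) ≤ (n : ℝ) := by exact_mod_cast hn
  have hn0 : (n : ℝ) ≠ 0 := by linarith
  have hn1 : (n : ℝ) - 1 ≠ 0 := by linarith
  have hn2 : (n : ℝ) - 2 ≠ 0 := by linarith
  have hn3 : (n : ℝ) - 3 ≠ 0 := by linarith
  field_simp
  ring
end

section
/- Let v ∈ ℝ^n with v^T Y = 0 for an n×d real matrix Y whose rows y_i satisfy ‖y_i‖ ≤ ζ, and let A be a uniformly random subset of [n] of size n−t+1 for some t ∈ [n]. Then E[‖v[A]^T Y[A,:]‖²] ≤ ((n−t+1)(t−1)/(n(n−1))) ‖v‖_∞² ‖Y‖_Frob², where v[A] and Y[A,:] are the restrictions to coordinates/rows in A. -/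
open Matrix Finset

private lemma count_mem' {α : Type*} [DecidableEq α] (s : Finset α) (k : ℕ) (a : α) (ha : a ∈ s) :
    ((s.powersetCard (k+1)).filter (fun A => a ∈ A)).card
      = ((s.erase a).powersetCard k).card := by
  refine Finset.card_bij' (fun A _ => A.erase a) (fun B _ => insert a B) ?hi ?hj ?li ?ri
  case hi =>
    intro A hA
    simp only [mem_filter, mem_powersetCard] at hA
    obtain ⟨⟨hsub, hcard⟩, haA⟩ := hA
    simp only [mem_powersetCard]
    refine ⟨fun x hx => ?_, ?_⟩
    · simp only [mem_erase] at hx ⊢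
      exact ⟨hx.1, hsub hx.2⟩
    · rw [Finset.card_erase_of_mem haA, hcard]
      omega
  case hj =>
    intro B hB
    simp only [mem_powersetCard] at hB
    obtain ⟨hsub, hcard⟩ := hB
    have haB : a ∉ B := fun h => (Finset.mem_erase.mp (hsub h)).1 rfl
    simp only [mem_filter, mem_powersetCard]
    refine ⟨⟨?_, ?_⟩, mem_insert_self _ _⟩
    · intro x hx
      rcases Finset.mem_insert.mp hx with h | h
      · exact h ▸ ha
      · exact (Finset.erase_subset _ _) (hsub h)
    · rw [Finset.card_insert_of_notMem haB, hcard]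
  case li =>
    intro A hA
    simp only [mem_filter] at hA
    exact Finset.insert_erase hA.2
  case ri =>
    intro B hB
    simp only [mem_powersetCard] at hB
    have haB : a ∉ B := fun h => (Finset.mem_erase.mp (hB.1 h)).1 rfl
    exact Finset.erase_insert haB

private lemma count_pair' {α : Type*} [DecidableEq α] (s : Finset α) (k : ℕ) (a b : α)
    (ha : a ∈ s) (hb : b ∈ s) (hab : a ≠ b) :
    ((s.powersetCard (k+2)).filter (fun A => a ∈ A ∧ b ∈ A)).card
      = (((s.erase a).erase b).powersetCard k).card := by
  refine Finset.card_bij' (fun A _ => (A.erase a).erase b) (fun B _ => insert a (insert b B))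
    ?hi ?hj ?li ?ri
  case hi =>
    intro A hA
    simp only [mem_filter, mem_powersetCard] at hA
    obtain ⟨⟨hsub, hcard⟩, haA, hbA⟩ := hA
    simp only [mem_powersetCard]
    refine ⟨fun x hx => ?_, ?_⟩
    · simp only [mem_erase] at hx ⊢
      exact ⟨hx.1, hx.2.1, hsub hx.2.2⟩
    · rw [Finset.card_erase_of_mem (Finset.mem_erase.mpr ⟨Ne.symm hab, hbA⟩),
        Finset.card_erase_of_mem haA, hcard]
      omega
  case hj =>
    intro B hB
    simp only [mem_powersetCard] at hB
    obtain ⟨hsub, hcard⟩ := hB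
    have hbB : b ∉ B := fun h => (Finset.mem_erase.mp (hsub h)).1 rfl
    have haB : a ∉ insert b B := by
      simp only [mem_insert]
      rintro (h | h)
      · exact hab h
      · exact (Finset.mem_erase.mp ((Finset.erase_subset _ _) (hsub h))).1 rfl
    simp only [mem_filter, mem_powersetCard]
    refine ⟨⟨?_, ?_⟩, mem_insert_self _ _, mem_insert_of_mem (mem_insert_self _ _)⟩
    · intro x hx
      rcases Finset.mem_insert.mp hx with h | h
      · exact h ▸ ha
      rcases Finset.mem_insert.mp h with h' | h'
      · exact h' ▸ hb
      · exact (Finset.erase_subset _ _) ((Finset.erase_subset _ _) (hsub h'))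
    · rw [Finset.card_insert_of_notMem haB, Finset.card_insert_of_notMem hbB, hcard]
  case li =>
    intro A hA
    simp only [mem_filter] at hA
    show insert a (insert b ((A.erase a).erase b)) = A
    rw [Finset.insert_erase (Finset.mem_erase.mpr ⟨Ne.symm hab, hA.2.2⟩),
      Finset.insert_erase hA.2.1]
  case ri =>
    intro B hB
    simp only [mem_powersetCard] at hB
    have hbB : b ∉ B := fun h => (Finset.mem_erase.mp (hB.1 h)).1 rfl
    have haB : a ∉ B := fun h =>
      (Finset.mem_erase.mp ((Finset.erase_subset _ _) (hB.1 h))).1 rfl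
    show ((insert a (insert b B)).erase a).erase b = B
    rw [Finset.erase_insert (by simp [hab, haB]), Finset.erase_insert hbB]

private lemma dot_sum_sum (n d : ℕ) (x : Fin n → (Fin d → ℝ)) (s : Finset (Fin n)) :
    (∑ i ∈ s, x i) ⬝ᵥ (∑ j ∈ s, x j) = ∑ i ∈ s, ∑ j ∈ s, x i ⬝ᵥ x j := by
  calc (∑ i ∈ s, x i) ⬝ᵥ (∑ j ∈ s, x j)
      = ∑ c, (∑ i ∈ s, x i c) * (∑ j ∈ s, x j c) := by
        simp [dotProduct, Finset.sum_apply]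
    _ = ∑ c, ∑ i ∈ s, ∑ j ∈ s, x i c * x j c :=
        Finset.sum_congr rfl fun c _ => Finset.sum_mul_sum _ _ _ _
    _ = ∑ i ∈ s, ∑ j ∈ s, ∑ c, x i c * x j c := by
        rw [Finset.sum_comm]
        exact Finset.sum_congr rfl fun i _ => Finset.sum_comm
    _ = ∑ i ∈ s, ∑ j ∈ s, x i ⬝ᵥ x j := rfl

private lemma expand_sq (n d k : ℕ) (x : Fin n → (Fin d → ℝ)) :
    ∑ A ∈ Finset.powersetCard k (Finset.univ : Finset (Fin n)),
        (∑ i ∈ A, x i) ⬝ᵥ (∑ i ∈ A, x i)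
      = ∑ i, ∑ j, (((Finset.powersetCard k (Finset.univ : Finset (Fin n))).filter
          (fun A => i ∈ A ∧ j ∈ A)).card : ℝ) * (x i ⬝ᵥ x j) := by
  have step1 : ∀ A : Finset (Fin n), (∑ i ∈ A, x i) ⬝ᵥ (∑ i ∈ A, x i)
      = ∑ i : Fin n, ∑ j : Fin n, if i ∈ A ∧ j ∈ A then x i ⬝ᵥ x j else 0 := by
    intro A
    rw [dot_sum_sum]
    have h1 : ∀ g : Fin n → ℝ, ∑ i ∈ A, g i = ∑ i : Fin n, if i ∈ A then g i else 0 := by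
      intro g
      rw [Finset.sum_ite_mem, Finset.univ_inter]
    calc ∑ i ∈ A, ∑ j ∈ A, x i ⬝ᵥ x j
        = ∑ i ∈ A, ∑ j : Fin n, if j ∈ A then x i ⬝ᵥ x j else 0 :=
          Finset.sum_congr rfl fun i _ => h1 _
      _ = ∑ i : Fin n, if i ∈ A then ∑ j : Fin n, if j ∈ A then x i ⬝ᵥ x j else 0 else 0 :=
          h1 _
      _ = ∑ i : Fin n, ∑ j : Fin n, if i ∈ A ∧ j ∈ A then x i ⬝ᵥ x j else 0 := by
          refine Finset.sum_congr rfl fun i _ => ?_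
          by_cases h : i ∈ A <;> simp [h]
  rw [Finset.sum_congr rfl fun A _ => step1 A, Finset.sum_comm]
  refine Finset.sum_congr rfl fun i _ => ?_
  rw [Finset.sum_comm]
  refine Finset.sum_congr rfl fun j _ => ?_
  rw [Finset.sum_ite, Finset.sum_const, Finset.sum_const_zero, add_zero, nsmul_eq_mul]

private lemma cnt_split (n d : ℕ) (x : Fin n → (Fin d → ℝ)) (hx0 : ∑ i, x i = 0)
    (c1 c2 : ℕ) (cnt : Fin n → Fin n → ℕ)
    (hdiag : ∀ i, cnt i i = c1) (hoff : ∀ i j, i ≠ j → cnt i j = c2) :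
    ∑ i, ∑ j, (cnt i j : ℝ) * (x i ⬝ᵥ x j) = ((c1:ℝ) - c2) * ∑ i, x i ⬝ᵥ x i := by
  have hT : ∑ i : Fin n, ∑ j : Fin n, x i ⬝ᵥ x j = 0 := by
    rw [← dot_sum_sum, hx0]
    simp
  calc ∑ i, ∑ j, (cnt i j : ℝ) * (x i ⬝ᵥ x j)
      = ∑ i : Fin n, ∑ j : Fin n,
          ((c2:ℝ) * (x i ⬝ᵥ x j) + if i = j then ((c1:ℝ) - c2) * (x i ⬝ᵥ x j) else 0) := by
        refine Finset.sum_congr rfl fun i _ => Finset.sum_congr rfl fun j _ => ?_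
        by_cases h : i = j
        · subst h; rw [hdiag i]; simp; ring
        · rw [hoff i j h]; simp [h]
    _ = (∑ i : Fin n, ∑ j : Fin n, (c2:ℝ) * (x i ⬝ᵥ x j))
          + ∑ i : Fin n, ((c1:ℝ) - c2) * (x i ⬝ᵥ x i) := by
        rw [← Finset.sum_add_distrib]
        refine Finset.sum_congr rfl fun i _ => ?_
        rw [Finset.sum_add_distrib]
        congr 1
        rw [Finset.sum_ite_eq (Finset.univ : Finset (Fin n)) i
          (fun j => ((c1:ℝ) - c2) * (x i ⬝ᵥ x j))]
        simp
    _ = (c2:ℝ) * (∑ i : Fin n, ∑ j : Fin n, x i ⬝ᵥ x j)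
          + ((c1:ℝ) - c2) * ∑ i, x i ⬝ᵥ x i := by
        congr 1 <;> simp [Finset.mul_sum]
    _ = ((c1:ℝ) - c2) * ∑ i, x i ⬝ᵥ x i := by
        rw [hT]
        ring

private lemma choose_id1 (n k : ℕ) (hn : 1 ≤ n) :
    n * (n-1).choose k = n.choose (k+1) * (k+1) := by
  obtain ⟨n', rfl⟩ : ∃ n', n = n' + 1 := ⟨n-1, by omega⟩
  simpa using Nat.add_one_mul_choose_eq n' k

private lemma choose_id2 (n m : ℕ) (hn : 2 ≤ n) :
    (n * (n-1)) * (if m = 0 then 0 else (n-2).choose (m-1))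
      = n.choose (m+1) * ((m+1) * m) := by
  match m with
  | 0 => simp
  | (m'+1) =>
    simp only [Nat.succ_ne_zero, if_false, Nat.add_sub_cancel]
    have h1 : (n-1) * (n-2).choose m' = (n-1).choose (m'+1) * (m'+1) := by
      have := choose_id1 (n-1) m' (by omega)
      rwa [show n - 1 - 1 = n - 2 by omega] at this
    have h2 : n * (n-1).choose (m'+1) = n.choose (m'+2) * (m'+2) := choose_id1 n (m'+1) (by omega)
    calc (n * (n-1)) * (n-2).choose m'
        = n * ((n-1) * (n-2).choose m') := by ring
      _ = n * ((n-1).choose (m'+1) * (m'+1)) := by rw [h1]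
      _ = (n * (n-1).choose (m'+1)) * (m'+1) := by ring
      _ = (n.choose (m'+2) * (m'+2)) * (m'+1) := by rw [h2]
      _ = n.choose (m'+1+1) * ((m'+1+1) * (m'+1)) := by ring

/-- Second moment bound: for `v` with `vᵀY = 0` and a uniformly random subset
`A` of size `n - t + 1`, `E[‖v[A]ᵀ Y[A,:]‖²] ≤ ((n-t+1)(t-1)/(n(n-1))) ‖v‖_∞² ‖Y‖_F²`. -/
theorem swor_second_moment_vY (n d t : ℕ) (ht1 : 1 ≤ t) (htn : t ≤ n)
    (Y : Matrix (Fin n) (Fin d) ℝ) (v : Fin n → ℝ) (ζ : ℝ)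
    (hrow : ∀ i, Real.sqrt (Y i ⬝ᵥ Y i) ≤ ζ)
    (hvY : v ᵥ* Y = 0) :
    (∑ A ∈ Finset.powersetCard (n - t + 1) (Finset.univ : Finset (Fin n)),
        (∑ i ∈ A, v i • Y i) ⬝ᵥ (∑ i ∈ A, v i • Y i)) /
      (Finset.powersetCard (n - t + 1) (Finset.univ : Finset (Fin n))).card ≤
    (((n : ℝ) - t + 1) * ((t : ℝ) - 1) / ((n : ℝ) * ((n : ℝ) - 1))) *
      (⨆ i, |v i|) ^ 2 * ∑ i, ∑ j, Y i j ^ 2 := by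
  have hn1 : 1 ≤ n := le_trans ht1 htn
  have hx0 : ∑ i : Fin n, v i • Y i = 0 := by
    rw [← hvY]
    funext c
    simp [Matrix.vecMul, dotProduct, Finset.sum_apply, mul_comm]
  set M : ℝ := ⨆ i, |v i| with hMdef
  have hbdd : BddAbove (Set.range fun i => |v i|) := (Set.finite_range _).bddAbove
  have hvle : ∀ i, |v i| ≤ M := fun i => le_ciSup hbdd i
  have hDle : ∑ i : Fin n, (v i • Y i) ⬝ᵥ (v i • Y i) ≤ M^2 * ∑ i, ∑ j, Y i j ^ 2 := by
    rw [Finset.mul_sum]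
    refine Finset.sum_le_sum fun i _ => ?_
    have h1 : (v i • Y i) ⬝ᵥ (v i • Y i) = v i ^ 2 * ∑ c, Y i c ^ 2 := by
      simp [dotProduct, Finset.mul_sum]
      exact Finset.sum_congr rfl fun c _ => by ring
    rw [h1]
    have h2 : v i ^ 2 ≤ M ^ 2 := by
      rw [← sq_abs]
      exact pow_le_pow_left₀ (abs_nonneg _) (hvle i) 2
    have h3 : (0:ℝ) ≤ ∑ c, Y i c ^ 2 := Finset.sum_nonneg fun c _ => sq_nonneg _
    exact mul_le_mul_of_nonneg_right h2 h3
  rcases eq_or_lt_of_le ht1 with h1 | ht2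
  · -- case t = 1 : the sum is over the single set univ and vanishes
    subst h1
    have hk : n - 1 + 1 = n := by omega
    rw [hk]
    have hps : Finset.powersetCard n (Finset.univ : Finset (Fin n)) = {Finset.univ} := by
      ext A
      simp only [Finset.mem_powersetCard, Finset.mem_singleton, Finset.subset_univ, true_and]
      constructor
      · intro h
        apply Finset.eq_univ_of_card
        rw [h, Fintype.card_fin]
      · rintro rfl
        exact Finset.card_fin n
    rw [hps, Finset.sum_singleton, hx0]
    simp
  · -- case 2 ≤ t
    have hn2 : 2 ≤ n := le_trans ht2 htn
    set m : ℕ := n - t with hm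
    set P := Finset.powersetCard (m + 1) (Finset.univ : Finset (Fin n)) with hPdef
    have hdiag : ∀ i : Fin n, ((P.filter fun A => i ∈ A ∧ i ∈ A).card) = (n-1).choose m := by
      intro i
      have h := count_mem' (Finset.univ : Finset (Fin n)) m i (Finset.mem_univ i)
      simp only [and_self]
      rw [hPdef, h, Finset.card_powersetCard, Finset.card_erase_of_mem (Finset.mem_univ i),
        Finset.card_fin]
    have hoff : ∀ i j : Fin n, i ≠ j →
        ((P.filter fun A => i ∈ A ∧ j ∈ A).card)
          = (if m = 0 then 0 else (n-2).choose (m-1)) := by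
      intro i j hij
      by_cases hm0 : m = 0
      · rw [if_pos hm0]
        rw [Finset.card_eq_zero, Finset.filter_eq_empty_iff]
        rintro A hA ⟨hi, hj⟩
        rw [hPdef, hm0, Finset.mem_powersetCard] at hA
        obtain ⟨a, rfl⟩ := Finset.card_eq_one.mp hA.2
        rw [Finset.mem_singleton] at hi hj
        exact hij (hi.trans hj.symm)
      · obtain ⟨m', hm'⟩ := Nat.exists_eq_succ_of_ne_zero hm0
        have h := count_pair' (Finset.univ : Finset (Fin n)) m' i j
          (Finset.mem_univ i) (Finset.mem_univ j) hij
        rw [if_neg hm0, hPdef, hm']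
        rw [show m' + 1 + 1 = m' + 2 from rfl, h, Finset.card_powersetCard,
          Finset.card_erase_of_mem, Finset.card_erase_of_mem (Finset.mem_univ i),
          Finset.card_fin]
        · rw [show n - 1 - 1 = n - 2 by omega, Nat.succ_sub_one]
        · exact Finset.mem_erase.mpr ⟨Ne.symm hij, Finset.mem_univ j⟩
    have hS : (∑ A ∈ P, (∑ i ∈ A, v i • Y i) ⬝ᵥ (∑ i ∈ A, v i • Y i))
        = ((((n-1).choose m : ℕ):ℝ) - ((if m = 0 then 0 else (n-2).choose (m-1) : ℕ):ℝ))
            * ∑ i : Fin n, (v i • Y i) ⬝ᵥ (v i • Y i) := by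
      rw [hPdef, expand_sq n d (m+1) (fun i => v i • Y i)]
      exact cnt_split n d (fun i => v i • Y i) hx0 _ _ _ hdiag hoff
    have hPcard : P.card = n.choose (m+1) := by
      rw [hPdef, Finset.card_powersetCard, Finset.card_fin]
    have hNpos : 0 < n.choose (m+1) := Nat.choose_pos (by omega)
    have hNpos' : (0:ℝ) < (n.choose (m+1) : ℝ) := by exact_mod_cast hNpos
    have hid1 : (n:ℝ) * (((n-1).choose m : ℕ):ℝ) = (n.choose (m+1) : ℝ) * ((m:ℝ)+1) := by
      have h := choose_id1 n m hn1
      exact_mod_cast congrArg (Nat.cast : ℕ → ℝ) h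
    have hid2 : ((n:ℝ) * ((n:ℝ)-1)) * ((if m = 0 then 0 else (n-2).choose (m-1) : ℕ):ℝ)
        = (n.choose (m+1) : ℝ) * (((m:ℝ)+1) * m) := by
      by_cases hm0 : m = 0
      · simp [hm0]
      · rw [if_neg hm0]
        have h := congrArg (Nat.cast : ℕ → ℝ) (choose_id2 n m hn2)
        rw [if_neg hm0] at h
        push_cast [Nat.cast_sub hn1] at h
        linear_combination h
    have hmr : (m:ℝ) = (n:ℝ) - t := by
      rw [hm]
      push_cast [Nat.cast_sub htn]
      ring
    have hnn1 : (0:ℝ) < (n:ℝ) * ((n:ℝ)-1) := by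
      have h2 : (2:ℝ) ≤ (n:ℝ) := by exact_mod_cast hn2
      nlinarith
    have hcoef : ((((n-1).choose m : ℕ):ℝ) - ((if m = 0 then 0 else (n-2).choose (m-1) : ℕ):ℝ))
          / (n.choose (m+1) : ℝ)
        = ((n:ℝ) - t + 1) * ((t:ℝ) - 1) / ((n:ℝ) * ((n:ℝ)-1)) := by
      rw [div_eq_div_iff hNpos'.ne' hnn1.ne']
      have e1 : ((n:ℝ) - t + 1) = (m:ℝ) + 1 := by rw [hmr]
      have e2 : ((t:ℝ) - 1) = (n:ℝ) - 1 - m := by rw [hmr]; ring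
      rw [e1, e2]
      linear_combination ((n:ℝ)-1) * hid1 - hid2
    have hcoef0 : (0:ℝ) ≤ ((n:ℝ) - t + 1) * ((t:ℝ) - 1) / ((n:ℝ) * ((n:ℝ)-1)) := by
      apply div_nonneg _ hnn1.le
      have h1 : (1:ℝ) ≤ (t:ℝ) := by exact_mod_cast ht1
      have h2 : (t:ℝ) ≤ (n:ℝ) := by exact_mod_cast htn
      nlinarith
    show (∑ A ∈ P, (∑ i ∈ A, v i • Y i) ⬝ᵥ (∑ i ∈ A, v i • Y i)) / (P.card : ℝ) ≤ _
    rw [hS, hPcard]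
    calc ((((n-1).choose m : ℕ):ℝ) - ((if m = 0 then 0 else (n-2).choose (m-1) : ℕ):ℝ))
          * (∑ i : Fin n, (v i • Y i) ⬝ᵥ (v i • Y i)) / (n.choose (m+1) : ℝ)
        = (((((n-1).choose m : ℕ):ℝ) - ((if m = 0 then 0 else (n-2).choose (m-1) : ℕ):ℝ))
            / (n.choose (m+1) : ℝ)) * ∑ i : Fin n, (v i • Y i) ⬝ᵥ (v i • Y i) := by
          ring
      _ = (((n:ℝ) - t + 1) * ((t:ℝ) - 1) / ((n:ℝ) * ((n:ℝ)-1)))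
            * ∑ i : Fin n, (v i • Y i) ⬝ᵥ (v i • Y i) := by rw [hcoef]
      _ ≤ (((n:ℝ) - t + 1) * ((t:ℝ) - 1) / ((n:ℝ) * ((n:ℝ)-1))) * (M^2 * ∑ i, ∑ j, Y i j ^ 2) :=
          mul_le_mul_of_nonneg_left hDle hcoef0
      _ = (((n:ℝ) - t + 1) * ((t:ℝ) - 1) / ((n:ℝ) * ((n:ℝ)-1))) * M^2 * ∑ i, ∑ j, Y i j ^ 2 := by
          ring
end

section
/- Let v ∈ ℝ^n with v^T Y = 0 for an n×d real matrix Y with rows of norm at most ζ, and let A be a uniformly random subset of [n] of size n−t+1 with n ≥ 4. Then E[‖v[A]^T Y[A,:]‖⁴] ≤ C d ‖v‖_∞⁴ ( ((n−t+1)²(t−1)²/n⁴) ‖Y‖_Frob⁴ + ((n−t+1)(t−1)/n²) ζ² ‖Y‖_Frob² ) for an absolute constant C. -/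
open Matrix

section AuxSworFourthMoment
open Finset

lemma count_supersets {n : ℕ} (r : ℕ) (s : Finset (Fin n)) :
    (((Finset.powersetCard r (Finset.univ : Finset (Fin n))).filter (fun A => s ⊆ A)).card)
      = if s.card ≤ r then (n - s.card).choose (r - s.card) else 0 := by
  split_ifs with h
  · have hc : (sᶜ : Finset (Fin n)).card = n - s.card := by simp [Finset.card_compl]
    rw [← hc, ← Finset.card_powersetCard]
    · apply Finset.card_bij' (fun A _ => A \ s) (fun B _ => s ∪ B)
      · intro A hA
        simp only [Finset.mem_filter, Finset.mem_powersetCard_univ] at hA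
        simp only [Finset.mem_powersetCard]
        constructor
        · intro x hx
          simp only [Finset.mem_sdiff] at hx
          simp [Finset.mem_compl, hx.2]
        · rw [Finset.card_sdiff_of_subset hA.2, hA.1]
      · intro B hB
        simp only [Finset.mem_powersetCard] at hB
        simp only [Finset.mem_filter, Finset.mem_powersetCard_univ]
        have hdisj : Disjoint s B := by
          refine Finset.disjoint_left.2 fun x hx hxB => ?_
          have := hB.1 hxB
          simp [Finset.mem_compl] at this
          exact this hx
        constructor
        · rw [Finset.card_union_of_disjoint hdisj, hB.2]
          have : s.card ≤ n := by
            simpa using Finset.card_le_card (Finset.subset_univ s)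
          have hc : sᶜ.card = n - s.card := by simp [Finset.card_compl]
          omega
        · exact Finset.subset_union_left
      · intro A hA
        simp only [Finset.mem_filter] at hA
        exact Finset.union_sdiff_of_subset hA.2
      · intro B hB
        simp only [Finset.mem_powersetCard] at hB
        have hdisj : Disjoint s B := by
          refine Finset.disjoint_left.2 fun x hx hxB => ?_
          have := hB.1 hxB
          simp [Finset.mem_compl] at this
          exact this hx
        exact Finset.union_sdiff_cancel_left hdisj
  · rw [Finset.card_eq_zero, Finset.filter_eq_empty_iff]
    intro A hA
    simp only [Finset.mem_powersetCard_univ] at hA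
    intro hs
    exact h (hA ▸ Finset.card_le_card hs)

-- quadruple set as insert
lemma quad_insert {n : ℕ} (i j k l : Fin n) :
    ({i, j, k, l} : Finset (Fin n)) = insert l {i, j, k} := by
  ext x; simp; tauto

lemma triple_insert {n : ℕ} (i j k : Fin n) :
    ({i, j, k} : Finset (Fin n)) = insert k {i, j} := by
  ext x; simp; tauto

lemma expand_T {n r : ℕ} (a : Fin n → ℝ) :
    ∑ A ∈ Finset.powersetCard r (Finset.univ : Finset (Fin n)), (∑ i ∈ A, a i)^4
    = ∑ i, ∑ j, ∑ k, ∑ l, a i * a j * a k * a l *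
        (if ({i,j,k,l} : Finset (Fin n)).card ≤ r
          then ((n - ({i,j,k,l} : Finset (Fin n)).card).choose (r - ({i,j,k,l} : Finset (Fin n)).card) : ℝ)
          else 0) := by
  have key : ∀ A ∈ Finset.powersetCard r (Finset.univ : Finset (Fin n)),
      (∑ i ∈ A, a i)^4 = ∑ i, ∑ j, ∑ k, ∑ l,
        (if ({i,j,k,l} : Finset (Fin n)) ⊆ A then a i * a j * a k * a l else 0) := by
    intro A _
    have h1 : (∑ i ∈ A, a i) = ∑ i, (if i ∈ A then a i else 0) := by
      rw [Finset.sum_ite_mem, Finset.univ_inter]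
    rw [h1]
    have : (∑ i, (if i ∈ A then a i else 0))^4
        = (∑ i, (if i ∈ A then a i else 0)) * (∑ j, (if j ∈ A then a j else 0))
          * (∑ k, (if k ∈ A then a k else 0)) * (∑ l, (if l ∈ A then a l else 0)) := by ring
    rw [this]
    simp only [Finset.sum_mul, Finset.mul_sum]
    refine Finset.sum_congr rfl fun i _ => ?_
    refine Finset.sum_congr rfl fun j _ => ?_
    refine Finset.sum_congr rfl fun k _ => ?_
    refine Finset.sum_congr rfl fun l _ => ?_
    simp only [Finset.insert_subset_iff, Finset.singleton_subset_iff]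
    split_ifs <;> simp_all <;> ring
  rw [Finset.sum_congr rfl key, Finset.sum_comm]
  refine Finset.sum_congr rfl fun i _ => ?_
  rw [Finset.sum_comm]
  refine Finset.sum_congr rfl fun j _ => ?_
  rw [Finset.sum_comm]
  refine Finset.sum_congr rfl fun k _ => ?_
  rw [Finset.sum_comm]
  refine Finset.sum_congr rfl fun l _ => ?_
  rw [← Finset.sum_filter, Finset.sum_const, nsmul_eq_mul, count_supersets]
  rw [mul_comm]
  split_ifs <;> push_cast <;> ring

lemma insert_step1 {n : ℕ} (a : Fin n → ℝ) (ha : ∑ i, a i = 0) (s : Finset (Fin n)) (g : ℕ → ℝ) :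
    ∑ l, a l * g ((insert l s).card) = (g s.card - g (s.card+1)) * ∑ x ∈ s, a x := by
  have hcs : ∑ l ∈ sᶜ, a l = - ∑ x ∈ s, a x := by
    have := Finset.sum_add_sum_compl s a
    rw [ha] at this; linarith
  rw [← Finset.sum_add_sum_compl s (fun l => a l * g ((insert l s).card))]
  have h1 : ∑ l ∈ s, a l * g ((insert l s).card) = (∑ x ∈ s, a x) * g s.card := by
    rw [Finset.sum_congr rfl (fun l hl => by rw [Finset.insert_eq_self.2 hl] :
      ∀ l ∈ s, a l * g ((insert l s).card) = a l * g s.card), ← Finset.sum_mul]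
  have h2 : ∑ l ∈ sᶜ, a l * g ((insert l s).card) = (∑ l ∈ sᶜ, a l) * g (s.card + 1) := by
    rw [Finset.sum_congr rfl (fun l hl => by
      rw [Finset.card_insert_of_notMem (by simpa using (Finset.mem_compl.1 hl))] :
      ∀ l ∈ sᶜ, a l * g ((insert l s).card) = a l * g (s.card + 1)), ← Finset.sum_mul]
  rw [h1, h2, hcs]; ring

lemma insert_step2 {n : ℕ} (a : Fin n → ℝ) (ha : ∑ i, a i = 0) (s : Finset (Fin n)) (g : ℕ → ℝ) :
    ∑ k, a k * (g ((insert k s).card) * ∑ x ∈ insert k s, a x)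
      = g s.card * (∑ x ∈ s, a x)^2
        + g (s.card+1) * ((∑ i, (a i)^2) - (∑ x ∈ s, (a x)^2) - (∑ x ∈ s, a x)^2) := by
  have hcs : ∑ l ∈ sᶜ, a l = - ∑ x ∈ s, a x := by
    have := Finset.sum_add_sum_compl s a
    rw [ha] at this; linarith
  have hcs2 : ∑ l ∈ sᶜ, (a l)^2 = (∑ i, (a i)^2) - ∑ x ∈ s, (a x)^2 := by
    have := Finset.sum_add_sum_compl s (fun x => (a x)^2)
    linarith
  rw [← Finset.sum_add_sum_compl s (fun k => a k * (g ((insert k s).card) * ∑ x ∈ insert k s, a x))]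
  have h1 : ∑ k ∈ s, a k * (g ((insert k s).card) * ∑ x ∈ insert k s, a x)
      = g s.card * (∑ x ∈ s, a x)^2 := by
    have : ∀ k ∈ s, a k * (g ((insert k s).card) * ∑ x ∈ insert k s, a x)
        = (g s.card * ∑ x ∈ s, a x) * a k := fun k hk => by
      rw [Finset.insert_eq_self.2 hk]; ring
    rw [Finset.sum_congr rfl this, ← Finset.mul_sum]; ring
  have h2 : ∑ k ∈ sᶜ, a k * (g ((insert k s).card) * ∑ x ∈ insert k s, a x)
      = g (s.card+1) * ((∑ l ∈ sᶜ, (a l)^2) + (∑ x ∈ s, a x) * ∑ l ∈ sᶜ, a l) := by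
    have : ∀ k ∈ sᶜ, a k * (g ((insert k s).card) * ∑ x ∈ insert k s, a x)
        = g (s.card+1) * (a k)^2 + (g (s.card+1) * ∑ x ∈ s, a x) * a k := by
      intro k hk
      have hk' : k ∉ s := by simpa using (Finset.mem_compl.1 hk)
      rw [Finset.card_insert_of_notMem hk', Finset.sum_insert hk']; ring
    rw [Finset.sum_congr rfl this, Finset.sum_add_distrib, ← Finset.mul_sum, ← Finset.mul_sum]
    ring
  rw [h1, h2, hcs, hcs2]; ring

noncomputable def Dch (n r c : ℕ) : ℝ := if c ≤ r then ((n - c).choose (r - c) : ℝ) else 0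

noncomputable def gD (n r c : ℕ) : ℝ := Dch n r c - Dch n r (c+1)

lemma swor_identity {n r : ℕ} (a : Fin n → ℝ) (ha : ∑ i, a i = 0) :
    ∑ A ∈ Finset.powersetCard r (Finset.univ : Finset (Fin n)), (∑ i ∈ A, a i)^4
      = (gD n r 1 - 6 * gD n r 2 + 6 * gD n r 3) * (∑ i, (a i)^4)
        + (3 * (gD n r 2 - gD n r 3)) * (∑ i, (a i)^2)^2 := by
  rw [expand_T]
  have stepl : ∀ i j k : Fin n,
      (∑ l, a i * a j * a k * a l *
        (if ({i,j,k,l} : Finset (Fin n)).card ≤ r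
          then ((n - ({i,j,k,l} : Finset (Fin n)).card).choose (r - ({i,j,k,l} : Finset (Fin n)).card) : ℝ)
          else 0))
      = a i * a j * a k *
          (gD n r (({i,j,k} : Finset (Fin n)).card) * ∑ x ∈ ({i,j,k} : Finset (Fin n)), a x) := by
    intro i j k
    have h1 : ∀ l : Fin n, a i * a j * a k * a l *
        (if ({i,j,k,l} : Finset (Fin n)).card ≤ r
          then ((n - ({i,j,k,l} : Finset (Fin n)).card).choose (r - ({i,j,k,l} : Finset (Fin n)).card) : ℝ)
          else 0)
        = a i * a j * a k * (a l * Dch n r ((insert l ({i,j,k} : Finset (Fin n))).card)) := by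
      intro l
      rw [quad_insert i j k l, Dch]
      ring
    rw [Finset.sum_congr rfl (fun l _ => h1 l), ← Finset.mul_sum,
      insert_step1 a ha ({i,j,k} : Finset (Fin n)) (Dch n r)]
    rfl
  rw [Finset.sum_congr rfl (fun i _ => Finset.sum_congr rfl (fun j _ =>
      Finset.sum_congr rfl (fun k _ => stepl i j k)))]
  have stepk : ∀ i j : Fin n,
      (∑ k, a i * a j * a k *
          (gD n r (({i,j,k} : Finset (Fin n)).card) * ∑ x ∈ ({i,j,k} : Finset (Fin n)), a x))
      = a i * a j *
          (gD n r (({i,j} : Finset (Fin n)).card) * (∑ x ∈ ({i,j} : Finset (Fin n)), a x)^2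
            + gD n r (({i,j} : Finset (Fin n)).card + 1) *
              ((∑ x, (a x)^2) - (∑ x ∈ ({i,j} : Finset (Fin n)), (a x)^2)
                - (∑ x ∈ ({i,j} : Finset (Fin n)), a x)^2)) := by
    intro i j
    have h1 : ∀ k : Fin n, a i * a j * a k *
        (gD n r (({i,j,k} : Finset (Fin n)).card) * ∑ x ∈ ({i,j,k} : Finset (Fin n)), a x)
        = a i * a j * (a k * (gD n r ((insert k ({i,j} : Finset (Fin n))).card)
            * ∑ x ∈ insert k ({i,j} : Finset (Fin n)), a x)) := by
      intro k
      rw [triple_insert i j k]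
      ring
    rw [Finset.sum_congr rfl (fun k _ => h1 k), ← Finset.mul_sum,
      insert_step2 a ha ({i,j} : Finset (Fin n)) (gD n r)]
  rw [Finset.sum_congr rfl (fun i _ => Finset.sum_congr rfl (fun j _ => stepk i j))]
  have stepj : ∀ i : Fin n,
      (∑ j, a i * a j *
          (gD n r (({i,j} : Finset (Fin n)).card) * (∑ x ∈ ({i,j} : Finset (Fin n)), a x)^2
            + gD n r (({i,j} : Finset (Fin n)).card + 1) *
              ((∑ x, (a x)^2) - (∑ x ∈ ({i,j} : Finset (Fin n)), (a x)^2)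
                - (∑ x ∈ ({i,j} : Finset (Fin n)), a x)^2)))
      = a i * a i * (gD n r 1 * (a i)^2
          + gD n r 2 * ((∑ x, (a x)^2) - (a i)^2 - (a i)^2))
        + ((a i * (gD n r 2 * (a i)^2 + gD n r 3 * ((∑ x, (a x)^2) - 2*(a i)^2)))
              * ((∑ j, a j) - a i)
          + (2 * (a i)^2 * (gD n r 2 - gD n r 3)) * ((∑ j, (a j)^2) - (a i)^2)
          + (a i * (gD n r 2 - 2 * gD n r 3)) * ((∑ j, (a j)^3) - (a i)^3)) := by
    intro i
    rw [← Finset.add_sum_erase _ _ (Finset.mem_univ i)]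
    congr 1
    · have hii : ({i,i} : Finset (Fin n)) = {i} := by simp
      rw [hii]
      simp only [Finset.card_singleton, Finset.sum_singleton, Nat.reduceAdd]
    · have hterm : ∀ j ∈ Finset.univ.erase i,
          a i * a j *
            (gD n r (({i,j} : Finset (Fin n)).card) * (∑ x ∈ ({i,j} : Finset (Fin n)), a x)^2
              + gD n r (({i,j} : Finset (Fin n)).card + 1) *
                ((∑ x, (a x)^2) - (∑ x ∈ ({i,j} : Finset (Fin n)), (a x)^2)
                  - (∑ x ∈ ({i,j} : Finset (Fin n)), a x)^2))
          = (a i * (gD n r 2 * (a i)^2 + gD n r 3 * ((∑ x, (a x)^2) - 2*(a i)^2))) * a j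
            + (2 * (a i)^2 * (gD n r 2 - gD n r 3)) * (a j)^2
            + (a i * (gD n r 2 - 2 * gD n r 3)) * (a j)^3 := by
        intro j hj
        have hij : j ≠ i := (Finset.mem_erase.1 hj).1
        have hnot : i ∉ ({j} : Finset (Fin n)) := by simpa using Ne.symm hij
        have hcard : ({i,j} : Finset (Fin n)).card = 2 := by
          rw [Finset.card_insert_of_notMem hnot, Finset.card_singleton]
        have hs1 : ∑ x ∈ ({i,j} : Finset (Fin n)), a x = a i + a j := by
          rw [Finset.sum_insert hnot, Finset.sum_singleton]
        have hs2 : ∑ x ∈ ({i,j} : Finset (Fin n)), (a x)^2 = (a i)^2 + (a j)^2 := by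
          rw [Finset.sum_insert hnot, Finset.sum_singleton]
        rw [hcard, hs1, hs2]
        have h23 : (2 : ℕ) + 1 = 3 := rfl
        rw [h23]
        ring
      rw [Finset.sum_congr rfl hterm, Finset.sum_add_distrib, Finset.sum_add_distrib,
        ← Finset.mul_sum, ← Finset.mul_sum, ← Finset.mul_sum,
        Finset.sum_erase_eq_sub (Finset.mem_univ i),
        Finset.sum_erase_eq_sub (Finset.mem_univ i),
        Finset.sum_erase_eq_sub (Finset.mem_univ i)]
  rw [Finset.sum_congr rfl (fun i _ => stepj i)]
  simp only [ha]
  have final : ∀ i : Fin n,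
      a i * a i * (gD n r 1 * (a i)^2
          + gD n r 2 * ((∑ x, (a x)^2) - (a i)^2 - (a i)^2))
        + ((a i * (gD n r 2 * (a i)^2 + gD n r 3 * ((∑ x, (a x)^2) - 2*(a i)^2)))
              * (0 - a i)
          + (2 * (a i)^2 * (gD n r 2 - gD n r 3)) * ((∑ j, (a j)^2) - (a i)^2)
          + (a i * (gD n r 2 - 2 * gD n r 3)) * ((∑ j, (a j)^3) - (a i)^3))
      = (gD n r 1 - 6 * gD n r 2 + 6 * gD n r 3) * (a i)^4
        + (3 * (gD n r 2 - gD n r 3)) * ((∑ x, (a x)^2) * (a i)^2)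
        + (gD n r 2 - 2 * gD n r 3) * ((∑ x, (a x)^3) * a i) := by
    intro i
    ring
  rw [Finset.sum_congr rfl (fun i _ => final i), Finset.sum_add_distrib,
    Finset.sum_add_distrib]
  simp only [← Finset.mul_sum]
  rw [ha]
  ring

lemma Dch_nonneg (n r c : ℕ) : 0 ≤ Dch n r c := by
  rw [Dch]; split_ifs <;> positivity

lemma choose_le_succ_succ (a b : ℕ) : a.choose b ≤ (a+1).choose (b+1) := by
  rw [Nat.choose_succ_succ]; omega

lemma hD31 {n r : ℕ} (hn : 4 ≤ n) (hr : r ≤ n) : Dch n r 3 ≤ Dch n r 1 := by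
  by_cases h3 : 3 ≤ r
  · rw [Dch, Dch, if_pos h3, if_pos (by omega : 1 ≤ r)]
    have h1 := choose_le_succ_succ (n-3) (r-3)
    have h2 := choose_le_succ_succ (n-3+1) (r-3+1)
    have e1 : n - 3 + 1 + 1 = n - 1 := by omega
    have e2 : r - 3 + 1 + 1 = r - 1 := by omega
    rw [e1, e2] at h2
    exact_mod_cast le_trans h1 h2
  · rw [Dch, if_neg h3]; exact Dch_nonneg n r 1

lemma hD42 {n r : ℕ} (hn : 4 ≤ n) (hr : r ≤ n) : Dch n r 4 ≤ Dch n r 2 := by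
  by_cases h4 : 4 ≤ r
  · rw [Dch, Dch, if_pos h4, if_pos (by omega : 2 ≤ r)]
    have h1 := choose_le_succ_succ (n-4) (r-4)
    have h2 := choose_le_succ_succ (n-4+1) (r-4+1)
    have e1 : n - 4 + 1 + 1 = n - 2 := by omega
    have e2 : r - 4 + 1 + 1 = r - 2 := by omega
    rw [e1, e2] at h2
    exact_mod_cast le_trans h1 h2
  · rw [Dch, if_neg h4]; exact Dch_nonneg n r 2

lemma hD1_ratio {n r : ℕ} (hn : 4 ≤ n) (hr : r ≤ n) :
    Dch n r 1 * (n : ℝ) ≤ (n.choose r : ℝ) * r := by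
  by_cases h1 : 1 ≤ r
  · have hnat : n * (n-1).choose (r-1) = n.choose r * r := by
      have h := Nat.add_one_mul_choose_eq (n-1) (r-1)
      rw [show n - 1 + 1 = n by omega, show r - 1 + 1 = r by omega] at h
      exact h
    rw [Dch, if_pos h1]
    have := congrArg (Nat.cast : ℕ → ℝ) hnat
    push_cast at this
    linarith [this]
  · rw [Dch, if_neg h1]
    have : r = 0 := by omega
    simp [this]

lemma hD2_ratio {n r : ℕ} (hn : 4 ≤ n) (hr : r ≤ n) :
    Dch n r 2 * (n : ℝ)^2 ≤ (n.choose r : ℝ) * r^2 := by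
  by_cases h2 : 2 ≤ r
  · have hA := Nat.add_one_mul_choose_eq (n-1) (r-1)
    have hB := Nat.add_one_mul_choose_eq (n-2) (r-2)
    rw [show n - 1 + 1 = n by omega, show r - 1 + 1 = r by omega] at hA
    rw [show n - 2 + 1 = n-1 by omega, show r - 2 + 1 = r-1 by omega] at hB
    have hnat : n * ((n-1) * ((n-2).choose (r-2))) = n.choose r * r * (r-1) := by
      rw [hB, ← Nat.mul_assoc, hA]
    have hcast := congrArg (Nat.cast : ℕ → ℝ) hnat
    push_cast [Nat.cast_sub (show 1 ≤ n by omega), Nat.cast_sub (show 2 ≤ n by omega),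
      Nat.cast_sub (show 1 ≤ r by omega), Nat.cast_sub (show 2 ≤ r by omega)] at hcast
    rw [Dch, if_pos h2]
    have hNpos : (0:ℝ) ≤ (n.choose r : ℝ) := by positivity
    have hCpos : (0:ℝ) ≤ ((n-2).choose (r-2) : ℝ) := by positivity
    have hrn : (r:ℝ) ≤ (n:ℝ) := by exact_mod_cast hr
    have hr2 : (2:ℝ) ≤ (r:ℝ) := by exact_mod_cast h2
    have hn4 : (4:ℝ) ≤ (n:ℝ) := by exact_mod_cast hn
    nlinarith [hcast, mul_nonneg hNpos (by linarith : (0:ℝ) ≤ (r:ℝ)),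
      mul_nonneg (mul_nonneg hNpos (by linarith : (0:ℝ) ≤ (r:ℝ))) (by linarith : (0:ℝ) ≤ (n:ℝ) - (r:ℝ))]
  · rw [Dch, if_neg h2, zero_mul]
    positivity

lemma scalar_bound {n r : ℕ} (hn : 4 ≤ n) (hr : r ≤ n) (a : Fin n → ℝ) (ha : ∑ i, a i = 0) :
    ∑ A ∈ Finset.powersetCard r (Finset.univ : Finset (Fin n)), (∑ i ∈ A, a i)^4
      ≤ (n.choose r : ℝ) * ((13 * r / n) * (∑ i, (a i)^4)
          + (6 * r^2 / n^2) * (∑ i, (a i)^2)^2) := by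
  rw [swor_identity a ha]
  have hF : (0:ℝ) ≤ ∑ i, (a i)^4 := by positivity
  have hQ : (0:ℝ) ≤ (∑ i, (a i)^2)^2 := by positivity
  have hcF : gD n r 1 - 6 * gD n r 2 + 6 * gD n r 3 ≤ 13 * Dch n r 1 := by
    have h1 := Dch_nonneg n r 2
    have h2 := Dch_nonneg n r 4
    have h3 := hD31 hn hr
    simp only [gD]
    have e2 : (1:ℕ)+1 = 2 := rfl
    have e3 : (2:ℕ)+1 = 3 := rfl
    have e4 : (3:ℕ)+1 = 4 := rfl
    rw [e2, e3, e4]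
    linarith
  have hcQ : 3 * (gD n r 2 - gD n r 3) ≤ 6 * Dch n r 2 := by
    have h1 := Dch_nonneg n r 3
    have h2 := hD42 hn hr
    simp only [gD]
    have e3 : (2:ℕ)+1 = 3 := rfl
    have e4 : (3:ℕ)+1 = 4 := rfl
    rw [e3, e4]
    linarith
  have hnpos : (0:ℝ) < (n:ℝ) := by exact_mod_cast (show 0 < n by omega)
  have hn2pos : (0:ℝ) < (n:ℝ)^2 := by positivity
  have hD1b : Dch n r 1 ≤ (n.choose r : ℝ) * r / n := by
    rw [le_div_iff₀ hnpos]; exact hD1_ratio hn hr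
  have hD2b : Dch n r 2 ≤ (n.choose r : ℝ) * r^2 / n^2 := by
    rw [le_div_iff₀ hn2pos]; exact hD2_ratio hn hr
  have t1 : (gD n r 1 - 6 * gD n r 2 + 6 * gD n r 3) * (∑ i, (a i)^4)
      ≤ 13 * ((n.choose r : ℝ) * r / n) * (∑ i, (a i)^4) := by
    apply mul_le_mul_of_nonneg_right _ hF
    calc gD n r 1 - 6 * gD n r 2 + 6 * gD n r 3 ≤ 13 * Dch n r 1 := hcF
      _ ≤ _ := by linarith [hD1b]
  have t2 : (3 * (gD n r 2 - gD n r 3)) * (∑ i, (a i)^2)^2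
      ≤ 6 * ((n.choose r : ℝ) * r^2 / n^2) * (∑ i, (a i)^2)^2 := by
    apply mul_le_mul_of_nonneg_right _ hQ
    calc 3 * (gD n r 2 - gD n r 3) ≤ 6 * Dch n r 2 := hcQ
      _ ≤ _ := by linarith [hD2b]
  calc (gD n r 1 - 6 * gD n r 2 + 6 * gD n r 3) * (∑ i, (a i)^4)
        + (3 * (gD n r 2 - gD n r 3)) * (∑ i, (a i)^2)^2
      ≤ 13 * ((n.choose r : ℝ) * r / n) * (∑ i, (a i)^4)
        + 6 * ((n.choose r : ℝ) * r^2 / n^2) * (∑ i, (a i)^2)^2 := add_le_add t1 t2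
    _ = (n.choose r : ℝ) * ((13 * r / n) * (∑ i, (a i)^4)
          + (6 * r^2 / n^2) * (∑ i, (a i)^2)^2) := by ring

lemma complement_sum {n k : ℕ} (hk : k ≤ n) (a : Fin n → ℝ) (ha : ∑ i, a i = 0) :
    ∑ A ∈ Finset.powersetCard k (Finset.univ : Finset (Fin n)), (∑ i ∈ A, a i)^4
      = ∑ B ∈ Finset.powersetCard (n-k) (Finset.univ : Finset (Fin n)), (∑ i ∈ B, a i)^4 := by
  apply Finset.sum_nbij' (i := fun A => Aᶜ) (j := fun B => Bᶜ)
  · intro A hA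
    rw [Finset.mem_powersetCard_univ] at hA ⊢
    rw [Finset.card_compl, Fintype.card_fin, hA]
  · intro B hB
    rw [Finset.mem_powersetCard_univ] at hB ⊢
    rw [Finset.card_compl, Fintype.card_fin, hB]
    omega
  · intro A _; exact compl_compl A
  · intro B _; exact compl_compl B
  · intro A _
    have h := Finset.sum_add_sum_compl A a
    rw [ha] at h
    have : ∑ i ∈ Aᶜ, a i = -∑ i ∈ A, a i := by linarith
    rw [this]
    ring

lemma scalar_best {n k : ℕ} (hn : 4 ≤ n) (hk : k ≤ n) (a : Fin n → ℝ) (ha : ∑ i, a i = 0) :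
    ∑ A ∈ Finset.powersetCard k (Finset.univ : Finset (Fin n)), (∑ i ∈ A, a i)^4
      ≤ (n.choose k : ℝ) * ((26 * ((k:ℝ) * ((n:ℝ)-k)) / (n:ℝ)^2) * (∑ i, (a i)^4)
          + (26 * ((k:ℝ) * ((n:ℝ)-k))^2 / (n:ℝ)^4) * (∑ i, (a i)^2)^2) := by
  have hF : (0:ℝ) ≤ ∑ i, (a i)^4 := by positivity
  have hQ : (0:ℝ) ≤ (∑ i, (a i)^2)^2 := by positivity
  have hnpos : (0:ℝ) < (n:ℝ) := by exact_mod_cast (show 0 < n by omega)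
  have hNpos : (0:ℝ) ≤ (n.choose k : ℝ) := by positivity
  have hkn : (k:ℝ) ≤ (n:ℝ) := by exact_mod_cast hk
  have hk0 : (0:ℝ) ≤ (k:ℝ) := by positivity
  by_cases hc : 2 * k ≤ n
  · have hc' : (2:ℝ) * k ≤ n := by exact_mod_cast hc
    refine le_trans (scalar_bound hn hk a ha) ?_
    apply mul_le_mul_of_nonneg_left _ hNpos
    have keysq : (n:ℝ)^2 ≤ 4*((n:ℝ)-k)^2 := by
      nlinarith [mul_nonneg (show (0:ℝ) ≤ 2*((n:ℝ)-(k:ℝ))-(n:ℝ) by linarith)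
        (show (0:ℝ) ≤ 2*((n:ℝ)-(k:ℝ))+(n:ℝ) by linarith)]
    apply add_le_add
    · apply mul_le_mul_of_nonneg_right _ hF
      rw [div_le_div_iff₀ hnpos (by positivity)]
      nlinarith [mul_nonneg (mul_nonneg hk0 hnpos.le) (show (0:ℝ) ≤ (n:ℝ) - 2*(k:ℝ) by linarith)]
    · apply mul_le_mul_of_nonneg_right _ hQ
      rw [div_le_div_iff₀ (by positivity) (by positivity)]
      nlinarith [mul_le_mul_of_nonneg_left keysq (show (0:ℝ) ≤ 6*(k:ℝ)^2*(n:ℝ)^2 by positivity),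
        mul_nonneg (sq_nonneg ((k:ℝ)*((n:ℝ)-(k:ℝ)))) (sq_nonneg (n:ℝ))]
  · have hc' : (n:ℝ) < 2 * k := by exact_mod_cast (show n < 2 * k by omega)
    rw [complement_sum hk a ha]
    have hsym : n.choose (n - k) = n.choose k := Nat.choose_symm hk
    have hm : ((n - k : ℕ) : ℝ) = (n:ℝ) - k := by
      rw [Nat.cast_sub hk]
    refine le_trans (scalar_bound hn (by omega : n - k ≤ n) a ha) ?_
    rw [hsym, hm]
    apply mul_le_mul_of_nonneg_left _ hNpos
    have hnk0 : (0:ℝ) ≤ (n:ℝ) - k := by linarith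
    have keysq : (n:ℝ)^2 ≤ 4*(k:ℝ)^2 := by
      nlinarith [mul_nonneg (show (0:ℝ) ≤ 2*(k:ℝ)-(n:ℝ) by linarith)
        (show (0:ℝ) ≤ 2*(k:ℝ)+(n:ℝ) by linarith)]
    apply add_le_add
    · apply mul_le_mul_of_nonneg_right _ hF
      rw [div_le_div_iff₀ hnpos (by positivity)]
      nlinarith [mul_nonneg (mul_nonneg hnk0 hnpos.le) (show (0:ℝ) ≤ 2*(k:ℝ) - (n:ℝ) by linarith)]
    · apply mul_le_mul_of_nonneg_right _ hQ
      rw [div_le_div_iff₀ (by positivity) (by positivity)]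
      nlinarith [mul_le_mul_of_nonneg_left keysq (show (0:ℝ) ≤ 6*((n:ℝ)-(k:ℝ))^2*(n:ℝ)^2 by positivity),
        mul_nonneg (sq_nonneg ((k:ℝ)*((n:ℝ)-(k:ℝ)))) (sq_nonneg (n:ℝ))]

lemma sum_sq_le_sq_sum' {m : ℕ} (f : Fin m → ℝ) (h : ∀ i, 0 ≤ f i) :
    ∑ i, (f i)^2 ≤ (∑ i, f i)^2 := by
  calc ∑ i, (f i)^2 = ∑ i, f i * f i := by
        exact Finset.sum_congr rfl fun i _ => sq (f i)
    _ ≤ ∑ i, f i * (∑ j, f j) := by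
        refine Finset.sum_le_sum fun i _ => ?_
        exact mul_le_mul_of_nonneg_left
          (Finset.single_le_sum (fun j _ => h j) (Finset.mem_univ i)) (h i)
    _ = (∑ i, f i)^2 := by rw [← Finset.sum_mul]; ring


end AuxSworFourthMoment

/-- Fourth moment bound with an absolute constant `C`: for `v` with `vᵀY = 0`,
rows of `Y` of norm at most `ζ`, and a uniformly random subset `A` of size
`n - t + 1`, `E[‖v[A]ᵀ Y[A,:]‖⁴] ≤ C d ‖v‖_∞⁴ ( ((n-t+1)²(t-1)²/n⁴)‖Y‖_F⁴
+ ((n-t+1)(t-1)/n²) ζ² ‖Y‖_F² )`. -/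
theorem swor_fourth_moment_vY :
    ∃ C : ℝ, 0 < C ∧ ∀ (n d t : ℕ), 1 ≤ t → t ≤ n → 4 ≤ n →
      ∀ (Y : Matrix (Fin n) (Fin d) ℝ) (v : Fin n → ℝ) (ζ : ℝ),
        (∀ i, Real.sqrt (Y i ⬝ᵥ Y i) ≤ ζ) → v ᵥ* Y = 0 →
        (∑ A ∈ Finset.powersetCard (n - t + 1) (Finset.univ : Finset (Fin n)),
            ((∑ i ∈ A, v i • Y i) ⬝ᵥ (∑ i ∈ A, v i • Y i)) ^ 2) /
          (Finset.powersetCard (n - t + 1) (Finset.univ : Finset (Fin n))).card ≤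
        C * d * (⨆ i, |v i|) ^ 4 *
          ((((n : ℝ) - t + 1) ^ 2 * ((t : ℝ) - 1) ^ 2 / (n : ℝ) ^ 4) *
              (∑ i, ∑ j, Y i j ^ 2) ^ 2 +
            (((n : ℝ) - t + 1) * ((t : ℝ) - 1) / (n : ℝ) ^ 2) * ζ ^ 2 *
              (∑ i, ∑ j, Y i j ^ 2)) := by
  refine ⟨26, by norm_num, ?_⟩
  intro n d t ht1 htn hn4 Y v ζ hζ hvY
  set k := n - t + 1 with hkdef
  have hk : k ≤ n := by omega
  have hNcard : ((Finset.powersetCard k (Finset.univ : Finset (Fin n))).card : ℝ)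
      = (n.choose k : ℝ) := by
    rw [Finset.card_powersetCard, Finset.card_univ, Fintype.card_fin]
  have hNpos : (0:ℝ) < ((Finset.powersetCard k (Finset.univ : Finset (Fin n))).card : ℝ) := by
    rw [hNcard]
    exact_mod_cast Nat.choose_pos hk
  rw [div_le_iff₀ hNpos]
  -- notation
  set M := (⨆ i, |v i|) with hMdef
  set W := (∑ i, ∑ j, Y i j ^ 2) with hWdef
  have hbdd : BddAbove (Set.range fun i => |v i|) := Set.Finite.bddAbove (Set.finite_range _)
  have hM : ∀ i, |v i| ≤ M := fun i => le_ciSup hbdd i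
  have hM0 : 0 ≤ M := le_trans (abs_nonneg _) (hM ⟨0, by omega⟩)
  have hζ0 : 0 ≤ ζ := le_trans (Real.sqrt_nonneg _) (hζ ⟨0, by omega⟩)
  have ha : ∀ c : Fin d, ∑ i, v i * Y i c = 0 := by
    intro c
    have h := congrFun hvY c
    simpa [Matrix.vecMul, dotProduct] using h
  have hdot : ∀ A : Finset (Fin n),
      ((∑ i ∈ A, v i • Y i) ⬝ᵥ (∑ i ∈ A, v i • Y i)) = ∑ c, (∑ i ∈ A, v i * Y i c)^2 := by
    intro A
    simp only [dotProduct, Finset.sum_apply, Pi.smul_apply, smul_eq_mul]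
    exact Finset.sum_congr rfl fun c _ => (sq _).symm
  have hrow : ∀ i, ∑ c, (Y i c)^2 ≤ ζ^2 := by
    intro i
    have h0 : 0 ≤ Y i ⬝ᵥ Y i := Finset.sum_nonneg fun c _ => mul_self_nonneg _
    have h1 : Y i ⬝ᵥ Y i ≤ ζ^2 := by
      nlinarith [Real.sq_sqrt h0, Real.sqrt_nonneg (Y i ⬝ᵥ Y i), hζ i]
    calc ∑ c, (Y i c)^2 = Y i ⬝ᵥ Y i := by
          simp only [dotProduct]
          exact Finset.sum_congr rfl fun c _ => sq (Y i c)
      _ ≤ ζ^2 := h1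
  have hY2 : ∀ i c, (Y i c)^2 ≤ ζ^2 := fun i c =>
    le_trans (Finset.single_le_sum (fun c _ => sq_nonneg (Y i c)) (Finset.mem_univ c)) (hrow i)
  -- step 1 : Cauchy-Schwarz over columns
  have hcs : ∀ A : Finset (Fin n),
      (∑ c, (∑ i ∈ A, v i * Y i c)^2)^2 ≤ (d:ℝ) * ∑ c, (∑ i ∈ A, v i * Y i c)^4 := by
    intro A
    have h := Finset.sum_mul_sq_le_sq_mul_sq Finset.univ (fun _ => (1:ℝ))
      (fun c => (∑ i ∈ A, v i * Y i c)^2)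
    simp only [one_pow, one_mul, Finset.sum_const, Finset.card_univ, Fintype.card_fin,
      nsmul_eq_mul, mul_one] at h
    calc (∑ c, (∑ i ∈ A, v i * Y i c)^2)^2
        ≤ (d:ℝ) * ∑ c, ((∑ i ∈ A, v i * Y i c)^2)^2 := h
      _ = (d:ℝ) * ∑ c, (∑ i ∈ A, v i * Y i c)^4 := by
          congr 1
          exact Finset.sum_congr rfl fun c _ => by ring
  have step1 : ∑ A ∈ Finset.powersetCard k (Finset.univ : Finset (Fin n)),
      ((∑ i ∈ A, v i • Y i) ⬝ᵥ (∑ i ∈ A, v i • Y i)) ^ 2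
      ≤ (d:ℝ) * ∑ c, ∑ A ∈ Finset.powersetCard k (Finset.univ : Finset (Fin n)),
          (∑ i ∈ A, v i * Y i c)^4 := by
    rw [Finset.sum_comm, Finset.mul_sum]
    calc ∑ A ∈ Finset.powersetCard k (Finset.univ : Finset (Fin n)),
        ((∑ i ∈ A, v i • Y i) ⬝ᵥ (∑ i ∈ A, v i • Y i)) ^ 2
        = ∑ A ∈ Finset.powersetCard k (Finset.univ : Finset (Fin n)),
            (∑ c, (∑ i ∈ A, v i * Y i c)^2)^2 :=
          Finset.sum_congr rfl fun A _ => by rw [hdot A]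
      _ ≤ _ := Finset.sum_le_sum fun A _ => hcs A
  -- step 2 : scalar bound per column
  have step2 : ∀ c : Fin d,
      ∑ A ∈ Finset.powersetCard k (Finset.univ : Finset (Fin n)), (∑ i ∈ A, v i * Y i c)^4
      ≤ (n.choose k : ℝ) * ((26 * ((k:ℝ) * ((n:ℝ)-k)) / (n:ℝ)^2) * (∑ i, (v i * Y i c)^4)
          + (26 * ((k:ℝ) * ((n:ℝ)-k))^2 / (n:ℝ)^4) * (∑ i, (v i * Y i c)^2)^2) :=
    fun c => scalar_best hn4 hk (fun i => v i * Y i c) (ha c)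
  -- step 3 : bounds on column sums
  have hFb : ∑ c, ∑ i, (v i * Y i c)^4 ≤ M^4 * ζ^2 * W := by
    rw [Finset.sum_comm]
    calc ∑ i, ∑ c, (v i * Y i c)^4
        ≤ ∑ i, ∑ c, M^4 * (ζ^2 * (Y i c)^2) := by
          refine Finset.sum_le_sum fun i _ => Finset.sum_le_sum fun c _ => ?_
          have h1 : (v i)^4 ≤ M^4 := by
            have h2 : (v i)^2 ≤ M^2 := by nlinarith [hM i, abs_nonneg (v i), sq_abs (v i)]
            nlinarith [sq_nonneg (v i), sq_nonneg M]
          have h2 : (Y i c)^4 ≤ ζ^2 * (Y i c)^2 := by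
            nlinarith [hY2 i c, sq_nonneg (Y i c)]
          calc (v i * Y i c)^4 = (v i)^4 * (Y i c)^4 := by ring
            _ ≤ M^4 * (ζ^2 * (Y i c)^2) := by
                apply mul_le_mul h1 h2 (by positivity) (by positivity)
      _ = M^4 * ζ^2 * W := by
          rw [hWdef]
          simp only [← Finset.mul_sum]
          try ring
  have hQc0 : ∀ c, 0 ≤ ∑ i, (v i * Y i c)^2 := fun c => Finset.sum_nonneg fun i _ => sq_nonneg _
  have hQsum : ∑ c, ∑ i, (v i * Y i c)^2 ≤ M^2 * W := by
    rw [Finset.sum_comm]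
    calc ∑ i, ∑ c, (v i * Y i c)^2
        ≤ ∑ i, ∑ c, M^2 * (Y i c)^2 := by
          refine Finset.sum_le_sum fun i _ => Finset.sum_le_sum fun c _ => ?_
          have h2 : (v i)^2 ≤ M^2 := by nlinarith [hM i, abs_nonneg (v i), sq_abs (v i)]
          calc (v i * Y i c)^2 = (v i)^2 * (Y i c)^2 := by ring
            _ ≤ M^2 * (Y i c)^2 := mul_le_mul_of_nonneg_right h2 (sq_nonneg _)
      _ = M^2 * W := by
          rw [hWdef]
          simp only [← Finset.mul_sum]
          try ring
  have hQb : ∑ c, (∑ i, (v i * Y i c)^2)^2 ≤ M^4 * W^2 := by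
    calc ∑ c, (∑ i, (v i * Y i c)^2)^2
        ≤ (∑ c, ∑ i, (v i * Y i c)^2)^2 :=
          sum_sq_le_sq_sum' _ hQc0
      _ ≤ (M^2 * W)^2 := by
          apply pow_le_pow_left₀ (Finset.sum_nonneg fun c _ => hQc0 c) hQsum
      _ = M^4 * W^2 := by ring
  -- assemble
  have hW0 : 0 ≤ W := Finset.sum_nonneg fun i _ => Finset.sum_nonneg fun j _ => sq_nonneg _
  have hkcast : (k:ℝ) = (n:ℝ) - t + 1 := by
    rw [hkdef, Nat.cast_add, Nat.cast_sub htn, Nat.cast_one]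
  have hB1 : (0:ℝ) ≤ 26 * ((k:ℝ) * ((n:ℝ)-k)) / (n:ℝ)^2 := by
    have : (0:ℝ) ≤ (n:ℝ) - k := by
      have : (k:ℝ) ≤ (n:ℝ) := by exact_mod_cast hk
      linarith
    positivity
  have hB2 : (0:ℝ) ≤ 26 * ((k:ℝ) * ((n:ℝ)-k))^2 / (n:ℝ)^4 := by positivity
  calc ∑ A ∈ Finset.powersetCard k (Finset.univ : Finset (Fin n)),
      ((∑ i ∈ A, v i • Y i) ⬝ᵥ (∑ i ∈ A, v i • Y i)) ^ 2
      ≤ (d:ℝ) * ∑ c, ∑ A ∈ Finset.powersetCard k (Finset.univ : Finset (Fin n)),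
          (∑ i ∈ A, v i * Y i c)^4 := step1
    _ ≤ (d:ℝ) * ∑ c, ((n.choose k : ℝ) * ((26 * ((k:ℝ) * ((n:ℝ)-k)) / (n:ℝ)^2) * (∑ i, (v i * Y i c)^4)
          + (26 * ((k:ℝ) * ((n:ℝ)-k))^2 / (n:ℝ)^4) * (∑ i, (v i * Y i c)^2)^2)) := by
        apply mul_le_mul_of_nonneg_left (Finset.sum_le_sum fun c _ => step2 c) (by positivity)
    _ = (d:ℝ) * (n.choose k : ℝ) * ((26 * ((k:ℝ) * ((n:ℝ)-k)) / (n:ℝ)^2) * (∑ c, ∑ i, (v i * Y i c)^4)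
          + (26 * ((k:ℝ) * ((n:ℝ)-k))^2 / (n:ℝ)^4) * (∑ c, (∑ i, (v i * Y i c)^2)^2)) := by
        simp only [← Finset.mul_sum, Finset.sum_add_distrib]
        ring
    _ ≤ (d:ℝ) * (n.choose k : ℝ) * ((26 * ((k:ℝ) * ((n:ℝ)-k)) / (n:ℝ)^2) * (M^4 * ζ^2 * W)
          + (26 * ((k:ℝ) * ((n:ℝ)-k))^2 / (n:ℝ)^4) * (M^4 * W^2)) := by
        apply mul_le_mul_of_nonneg_left _ (by positivity)
        exact add_le_add (mul_le_mul_of_nonneg_left hFb hB1) (mul_le_mul_of_nonneg_left hQb hB2)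
    _ = 26 * (d:ℝ) * M ^ 4 *
          ((((n : ℝ) - t + 1) ^ 2 * ((t : ℝ) - 1) ^ 2 / (n : ℝ) ^ 4) * W ^ 2 +
            (((n : ℝ) - t + 1) * ((t : ℝ) - 1) / (n : ℝ) ^ 2) * ζ ^ 2 * W) *
          ((Finset.powersetCard k (Finset.univ : Finset (Fin n))).card : ℝ) := by
        rw [hNcard, hkcast]
        ring
end

section
/- With π, H, and T_n = Σ_j v_j² H(π^{-1}(j)) as above, Var[T_n] ≤ ‖v‖⁴ ( (‖v‖_∞²/‖v‖²)(log(en))² + 1/(n−1) ) for n ≥ 2. -/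
open Matrix

namespace VarTnAux

open Finset Equiv


lemma permA0 {k : ℕ} (g : Fin (k+1) → ℝ) :
    ∑ σ : Equiv.Perm (Fin (k+1)), g (σ 0) =
      (Fintype.card (Equiv.Perm (Fin k)) : ℝ) * ∑ i, g i := by
  rw [Fintype.sum_equiv Equiv.Perm.decomposeFin (fun σ => g (σ 0))
      (fun x => g (Equiv.Perm.decomposeFin.symm x 0))
      (fun σ => by simp)]
  simp only [Fintype.sum_prod_type, Equiv.Perm.decomposeFin_symm_apply_zero,
    Finset.sum_const, nsmul_eq_mul]
  rw [← Finset.mul_sum]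
  rfl

-- image of q ↦ swap 0 p q.succ sums over everything except p
lemma sum_swap_succ {k : ℕ} (h : Fin (k+2) → ℝ) (p : Fin (k+2)) :
    ∑ q : Fin (k+1), h (Equiv.swap 0 p q.succ) = (∑ b, h b) - h p := by
  have hinj : Function.Injective (fun q : Fin (k+1) => Equiv.swap 0 p q.succ) :=
    (Equiv.injective _).comp (Fin.succ_injective _)
  have himg : Finset.image (fun q : Fin (k+1) => Equiv.swap 0 p q.succ) Finset.univ
      = Finset.univ.erase p := by
    apply Finset.eq_of_subset_of_card_le
    · intro b hb
      simp only [Finset.mem_image, Finset.mem_univ, true_and] at hb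
      obtain ⟨q, rfl⟩ := hb
      refine Finset.mem_erase.2 ⟨?_, Finset.mem_univ _⟩
      intro hqe
      have : q.succ = (Equiv.swap 0 p) p := (Equiv.swap 0 p).injective (by simpa using hqe)
      simp [Equiv.swap_apply_right] at this
    · rw [Finset.card_erase_of_mem (Finset.mem_univ _),
        Finset.card_image_of_injective _ hinj]
      simp
  calc ∑ q : Fin (k+1), h (Equiv.swap 0 p q.succ)
      = ∑ b ∈ Finset.image (fun q : Fin (k+1) => Equiv.swap 0 p q.succ) Finset.univ, h b :=
        (Finset.sum_image (fun x _ y _ hxy => hinj hxy)).symm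
    _ = ∑ b ∈ Finset.univ.erase p, h b := by rw [himg]
    _ = (∑ b, h b) - h p := Finset.sum_erase_eq_sub (Finset.mem_univ p)

-- two-point sum over permutations, at coordinates 0 and 1
lemma permB0 {m : ℕ} (g h : Fin (m+2) → ℝ) :
    ∑ π : Equiv.Perm (Fin (m+2)), g (π 0) * h (π 1) =
      (Fintype.card (Equiv.Perm (Fin m)) : ℝ) *
        ((∑ i, g i) * (∑ i, h i) - ∑ i, g i * h i) := by
  rw [Fintype.sum_equiv Equiv.Perm.decomposeFin (fun π => g (π 0) * h (π 1))
      (fun x => g (Equiv.Perm.decomposeFin.symm x 0) * h (Equiv.Perm.decomposeFin.symm x 1))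
      (fun π => by simp)]
  have h1 : ∀ (p : Fin (m+2)) (σ : Equiv.Perm (Fin (m+1))),
      Equiv.Perm.decomposeFin.symm (p, σ) 1 = Equiv.swap 0 p (σ 0).succ := by
    intro p σ
    have : (1 : Fin (m+2)) = (0 : Fin (m+1)).succ := rfl
    rw [this, Equiv.Perm.decomposeFin_symm_apply_succ]
  rw [Fintype.sum_prod_type]
  have h2 : ∀ p : Fin (m+2),
      ∑ σ : Equiv.Perm (Fin (m+1)),
        g (Equiv.Perm.decomposeFin.symm (p, σ) 0) * h (Equiv.Perm.decomposeFin.symm (p, σ) 1)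
      = (Fintype.card (Equiv.Perm (Fin m)) : ℝ) * (g p * ((∑ b, h b) - h p)) := by
    intro p
    simp only [Equiv.Perm.decomposeFin_symm_apply_zero, h1]
    rw [← Finset.mul_sum, permA0 (fun q => h (Equiv.swap 0 p q.succ)), sum_swap_succ]
    ring
  rw [Finset.sum_congr rfl (fun p _ => h2 p), ← Finset.mul_sum]
  congr 1
  simp only [mul_sub, Finset.sum_sub_distrib, ← Finset.sum_mul]

lemma permA {m : ℕ} (g : Fin (m+2) → ℝ) (j : Fin (m+2)) :
    ∑ π : Equiv.Perm (Fin (m+2)), g (π j) =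
      (Fintype.card (Equiv.Perm (Fin (m+1))) : ℝ) * ∑ i, g i := by
  rw [← permA0 g]
  exact Fintype.sum_equiv (Equiv.mulRight (Equiv.swap 0 j)) _ _
    (fun π => by simp [Equiv.Perm.mul_apply])

lemma permB {m : ℕ} (g h : Fin (m+2) → ℝ) (j k : Fin (m+2)) (hjk : j ≠ k) :
    ∑ π : Equiv.Perm (Fin (m+2)), g (π j) * h (π k) =
      (Fintype.card (Equiv.Perm (Fin m)) : ℝ) *
        ((∑ i, g i) * (∑ i, h i) - ∑ i, g i * h i) := by
  rw [← permB0 g h]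
  set τ : Equiv.Perm (Fin (m+2)) := Equiv.swap 0 j
  set σ0 : Equiv.Perm (Fin (m+2)) := τ * Equiv.swap 1 (τ k) with hσ0
  have h0 : σ0 0 = j := by
    have hne1 : (0 : Fin (m+2)) ≠ 1 := Fin.zero_ne_one
    have hne2 : (0 : Fin (m+2)) ≠ τ k := by
      intro hc
      have := congrArg τ hc
      simp [τ, Equiv.swap_apply_left] at this
      exact hjk this
    simp [hσ0, Equiv.Perm.mul_apply, Equiv.swap_apply_of_ne_of_ne hne1 hne2, τ,
      Equiv.swap_apply_left]
  have h1 : σ0 1 = k := by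
    simp [hσ0, Equiv.Perm.mul_apply, Equiv.swap_apply_left, τ]
  exact Fintype.sum_equiv (Equiv.mulRight σ0) _ _
    (fun π => by simp [Equiv.Perm.mul_apply, h0, h1])


lemma sum_sum_range (f : ℕ → ℝ) (n : ℕ) :
    ∑ i ∈ range n, ∑ s ∈ range (i+1), f s = ∑ s ∈ range n, ((n - s : ℕ) : ℝ) * f s := by
  induction n with
  | zero => simp
  | succ n ih =>
    rw [Finset.sum_range_succ, ih]
    have h1 : ∀ s ∈ range (n+1), ((n + 1 - s : ℕ) : ℝ) * f s = ((n - s : ℕ) : ℝ) * f s + f s := by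
      intro s hs
      rw [Finset.mem_range] at hs
      have : n + 1 - s = (n - s) + 1 := by omega
      rw [this]; push_cast; ring
    rw [Finset.sum_congr rfl h1, Finset.sum_add_distrib,
      Finset.sum_range_succ (fun s => ((n - s : ℕ) : ℝ) * f s)]
    simp

noncomputable def Hf (n : ℕ) : Fin n → ℝ := fun i => ∑ s ∈ Finset.range (i.1+1), 1/((n:ℝ) - s)

lemma Hf_sum (n : ℕ) : ∑ i, Hf n i = n := by
  simp only [Hf]
  rw [Fin.sum_univ_eq_sum_range (fun i => ∑ s ∈ Finset.range (i+1), 1/((n:ℝ) - s)),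
    sum_sum_range]
  have : ∀ s ∈ range n, ((n - s : ℕ) : ℝ) * (1/((n:ℝ) - s)) = 1 := by
    intro s hs
    rw [Finset.mem_range] at hs
    have hlt : (s:ℝ) < n := by exact_mod_cast hs
    have h1 : ((n - s : ℕ) : ℝ) = (n:ℝ) - s := by
      push_cast [Nat.cast_sub hs.le]; ring
    rw [h1, mul_one_div, div_self (by linarith)]
  rw [Finset.sum_congr rfl this]
  simp

lemma Hf_nonneg (n : ℕ) (i : Fin n) : 0 ≤ Hf n i := by
  apply Finset.sum_nonneg
  intro s hs
  rw [Finset.mem_range] at hs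
  have : (s:ℝ) < n := by exact_mod_cast (lt_of_lt_of_le hs i.2)
  apply div_nonneg zero_le_one (by linarith)

lemma Hf_le (n : ℕ) (i : Fin n) : Hf n i ≤ (harmonic n : ℝ) := by
  have h1 : Hf n i ≤ ∑ s ∈ range n, 1/((n:ℝ) - s) := by
    apply Finset.sum_le_sum_of_subset_of_nonneg
    · exact Finset.range_subset_range.2 i.2
    · intro s hs _
      rw [Finset.mem_range] at hs
      have : (s:ℝ) < n := by exact_mod_cast hs
      apply div_nonneg zero_le_one (by linarith)
  refine h1.trans_eq ?_
  rw [← Finset.sum_range_reflect (fun s => 1/((n:ℝ) - s)) n, harmonic]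
  push_cast
  apply Finset.sum_congr rfl
  intro s hs
  rw [Finset.mem_range] at hs
  have h2 : ((n - 1 - s : ℕ) : ℝ) = (n:ℝ) - 1 - s := by
    have h3 : n - 1 - s = n - (1 + s) := by omega
    rw [h3, Nat.cast_sub (by omega)]
    push_cast; ring
  rw [h2]
  congr 1
  ring

end VarTnAux

open VarTnAux


set_option maxHeartbeats 1600000 in
/-- Variance bound for `Tₙ = ∑ⱼ vⱼ² H(π⁻¹(j))`:
`Var[Tₙ] ≤ ‖v‖⁴ ((‖v‖_∞²/‖v‖²)(log(en))² + 1/(n-1))` for `n ≥ 2`. -/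
theorem variance_Tn (n : ℕ) (hn : 2 ≤ n) (v : Fin n → ℝ) :
    (∑ π : Equiv.Perm (Fin n), (∑ j,
        v j ^ 2 * ∑ s ∈ Finset.range ((π⁻¹ j).1 + 1), 1 / ((n : ℝ) - s)) ^ 2) /
      (Fintype.card (Equiv.Perm (Fin n))) -
    ((∑ π : Equiv.Perm (Fin n), ∑ j,
        v j ^ 2 * ∑ s ∈ Finset.range ((π⁻¹ j).1 + 1), 1 / ((n : ℝ) - s)) /
      (Fintype.card (Equiv.Perm (Fin n)))) ^ 2 ≤
    (∑ j, v j ^ 2) ^ 2 *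
      ((⨆ j, |v j|) ^ 2 / (∑ j, v j ^ 2) * (Real.log (Real.exp 1 * n)) ^ 2 +
        1 / ((n : ℝ) - 1)) := by
  by_cases hW0 : ∑ j, v j ^ 2 = 0
  · have hv : ∀ j, v j = 0 := by
      intro j
      have := (Finset.sum_eq_zero_iff_of_nonneg (fun i _ => sq_nonneg (v i))).1 hW0 j
        (Finset.mem_univ j)
      exact pow_eq_zero_iff (n := 2) (by norm_num) |>.1 this
    simp [hv]
  obtain ⟨m, rfl⟩ : ∃ m, n = m + 2 := ⟨n - 2, by omega⟩
  -- notation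
  set H : Fin (m+2) → ℝ := Hf (m+2) with hH
  set W : ℝ := ∑ j, v j ^ 2 with hWdef
  set U : ℝ := ∑ j, v j ^ 2 * v j ^ 2 with hUdef
  set Q : ℝ := ∑ i, H i * H i with hQdef
  set M : ℝ := ⨆ j, |v (j : Fin (m+2))| with hMdef
  set L : ℝ := Real.log (Real.exp 1 * (m+2)) with hLdef
  set nr : ℝ := ((m+2 : ℕ) : ℝ) with hnr
  set c1 : ℝ := (Fintype.card (Equiv.Perm (Fin (m+1))) : ℝ) with hc1def
  set c2 : ℝ := (Fintype.card (Equiv.Perm (Fin m)) : ℝ) with hc2def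
  set K : ℝ := (Fintype.card (Equiv.Perm (Fin (m+2))) : ℝ) with hKdef
  -- replace π⁻¹ with π
  have hinv : ∀ F : Equiv.Perm (Fin (m+2)) → ℝ,
      (∑ π : Equiv.Perm (Fin (m+2)), F π⁻¹) = ∑ π : Equiv.Perm (Fin (m+2)), F π :=
    fun F => Fintype.sum_equiv (Equiv.inv _) _ _ (fun π => rfl)
  have hT : ∀ π : Equiv.Perm (Fin (m+2)),
      (∑ j, v j ^ 2 * ∑ s ∈ Finset.range ((π j).1 + 1), 1 / (((m+2:ℕ) : ℝ) - s))
        = ∑ j, v j ^ 2 * H (π j) := fun π => rfl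
  have e1 : (∑ π : Equiv.Perm (Fin (m+2)), ∑ j,
        v j ^ 2 * ∑ s ∈ Finset.range ((π⁻¹ j).1 + 1), 1 / (((m+2:ℕ) : ℝ) - s))
      = ∑ π : Equiv.Perm (Fin (m+2)), ∑ j, v j ^ 2 * H (π j) := by
    rw [hinv (fun π => ∑ j, v j ^ 2 * ∑ s ∈ Finset.range ((π j).1 + 1),
      1 / (((m+2:ℕ) : ℝ) - s))]
    exact Finset.sum_congr rfl fun π _ => hT π
  have e2 : (∑ π : Equiv.Perm (Fin (m+2)), (∑ j,
        v j ^ 2 * ∑ s ∈ Finset.range ((π⁻¹ j).1 + 1), 1 / (((m+2:ℕ) : ℝ) - s)) ^ 2)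
      = ∑ π : Equiv.Perm (Fin (m+2)), (∑ j, v j ^ 2 * H (π j)) ^ 2 := by
    rw [hinv (fun π => (∑ j, v j ^ 2 * ∑ s ∈ Finset.range ((π j).1 + 1),
      1 / (((m+2:ℕ) : ℝ) - s)) ^ 2)]
    exact Finset.sum_congr rfl fun π _ => by rw [hT π]
  rw [e1, e2]
  -- first moment
  have hSH : ∑ i, H i = nr := by rw [hH, Hf_sum, hnr]
  have hS1 : (∑ π : Equiv.Perm (Fin (m+2)), ∑ j, v j ^ 2 * H (π j)) = c1 * (nr * W) := by
    rw [Finset.sum_comm]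
    have : ∀ j : Fin (m+2), (∑ π : Equiv.Perm (Fin (m+2)), v j ^ 2 * H (π j))
        = v j ^ 2 * (c1 * nr) := by
      intro j
      rw [← Finset.mul_sum, permA H j, hSH]
    rw [Finset.sum_congr rfl (fun j _ => this j), ← Finset.sum_mul, ← hWdef]
    ring
  -- second moment
  have hS2 : (∑ π : Equiv.Perm (Fin (m+2)), (∑ j, v j ^ 2 * H (π j)) ^ 2)
      = c1 * Q * U + c2 * (nr * nr - Q) * (W * W - U) := by
    have expand : ∀ π : Equiv.Perm (Fin (m+2)), (∑ j, v j ^ 2 * H (π j)) ^ 2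
        = ∑ j, ∑ k, (v j ^ 2 * v k ^ 2) * (H (π j) * H (π k)) := by
      intro π
      rw [sq, Finset.sum_mul_sum]
      exact Finset.sum_congr rfl fun j _ => Finset.sum_congr rfl fun k _ => by ring
    rw [Finset.sum_congr rfl (fun π _ => expand π), Finset.sum_comm]
    have inner : ∀ j : Fin (m+2),
        (∑ π : Equiv.Perm (Fin (m+2)), ∑ k, (v j ^ 2 * v k ^ 2) * (H (π j) * H (π k)))
        = v j ^ 2 * v j ^ 2 * (c1 * Q) + c2 * (nr * nr - Q) * (v j ^ 2 * (W - v j ^ 2)) := by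
      intro j
      rw [Finset.sum_comm]
      have split : ∀ k : Fin (m+2),
          (∑ π : Equiv.Perm (Fin (m+2)), (v j ^ 2 * v k ^ 2) * (H (π j) * H (π k)))
          = (v j ^ 2 * v k ^ 2) * (∑ π : Equiv.Perm (Fin (m+2)), H (π j) * H (π k)) := by
        intro k; rw [Finset.mul_sum]
      rw [Finset.sum_congr rfl (fun k _ => split k)]
      rw [← Finset.add_sum_erase _ _ (Finset.mem_univ j)]
      have diag : (∑ π : Equiv.Perm (Fin (m+2)), H (π j) * H (π j)) = c1 * Q := by
        rw [permA (fun i => H i * H i) j, ← hQdef, hc1def]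
      have offd : ∀ k ∈ Finset.univ.erase j,
          (v j ^ 2 * v k ^ 2) * (∑ π : Equiv.Perm (Fin (m+2)), H (π j) * H (π k))
          = (v j ^ 2 * v k ^ 2) * (c2 * (nr * nr - Q)) := by
        intro k hk
        have hkj : j ≠ k := (Finset.ne_of_mem_erase hk).symm
        rw [permB H H j k hkj, hSH, ← hQdef, hc2def]
      rw [Finset.sum_congr rfl offd, diag]
      have : (∑ k ∈ Finset.univ.erase j, (v j ^ 2 * v k ^ 2) * (c2 * (nr * nr - Q)))
          = (v j ^ 2 * (W - v j ^ 2)) * (c2 * (nr * nr - Q)) := by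
        rw [← Finset.sum_mul, ← Finset.mul_sum,
          Finset.sum_erase_eq_sub (Finset.mem_univ j), ← hWdef]
      rw [this]; ring
    rw [Finset.sum_congr rfl (fun j _ => inner j)]
    rw [Finset.sum_add_distrib, ← Finset.sum_mul, ← hUdef, ← Finset.mul_sum]
    have : (∑ j, v j ^ 2 * (W - v j ^ 2)) = W * W - U := by
      simp only [mul_sub, Finset.sum_sub_distrib, ← Finset.sum_mul, ← hWdef, ← hUdef]
    rw [this]
    ring
  rw [hS1, hS2]
  -- cardinalities
  have hc2pos : 0 < c2 := by
    rw [hc2def, Fintype.card_perm, Fintype.card_fin]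
    positivity
  have hKc : K = nr * c1 := by
    rw [hKdef, hc1def, hnr, Fintype.card_perm, Fintype.card_perm, Fintype.card_fin,
      Fintype.card_fin, Nat.factorial_succ]
    push_cast; ring
  have hc1c : c1 = (nr - 1) * c2 := by
    rw [hc1def, hc2def, hnr, Fintype.card_perm, Fintype.card_perm, Fintype.card_fin,
      Fintype.card_fin, Nat.factorial_succ]
    push_cast; ring
  have hnr2 : (2:ℝ) ≤ nr := by rw [hnr]; push_cast; linarith
  have hnrpos : (0:ℝ) < nr := by linarith
  have hnr1pos : (0:ℝ) < nr - 1 := by linarith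
  have hc1pos : 0 < c1 := by rw [hc1c]; positivity
  have hKpos : 0 < K := by rw [hKc]; positivity
  -- simplify mean
  have hmean : c1 * (nr * W) / K = W := by
    rw [hKc]; field_simp
  rw [hmean]
  -- key facts
  have hHm : ∀ i, H i ≤ (harmonic (m+2) : ℝ) := fun i => Hf_le (m+2) i
  have hH0 : ∀ i, 0 ≤ H i := fun i => Hf_nonneg (m+2) i
  set Hm : ℝ := (harmonic (m+2) : ℝ) with hHmdef
  have hHm0 : 0 ≤ Hm := le_trans (hH0 0) (hHm 0)
  have hQsq : Q = ∑ i, H i ^ 2 := by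
    rw [hQdef]; exact Finset.sum_congr rfl fun i _ => (sq (H i)).symm ▸ by ring
  have hQge : nr ≤ Q := by
    have := sq_sum_le_card_mul_sum_sq (s := Finset.univ) (f := H)
    rw [hSH, Finset.card_univ, Fintype.card_fin, ← hnr, ← hQsq] at this
    nlinarith
  have hQle : Q ≤ nr * Hm ^ 2 := by
    rw [hQsq]
    calc ∑ i, H i ^ 2 ≤ ∑ _i : Fin (m+2), Hm ^ 2 :=
          Finset.sum_le_sum fun i _ => pow_le_pow_left₀ (hH0 i) (hHm i) 2
      _ = nr * Hm ^ 2 := by rw [Finset.sum_const, Finset.card_univ, Fintype.card_fin,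
            nsmul_eq_mul, hnr]
  have hHmL : Hm ≤ L := by
    rw [hLdef, Real.log_mul (Real.exp_ne_zero 1) (by positivity), Real.log_exp]
    have h := harmonic_le_one_add_log (m+2)
    push_cast at h ⊢
    linarith
  have hL0 : 0 ≤ L := hHm0.trans hHmL
  -- v facts
  have hWpos : 0 < W := lt_of_le_of_ne (Finset.sum_nonneg fun i _ => sq_nonneg (v i))
    (Ne.symm hW0)
  have hU0 : 0 ≤ U := Finset.sum_nonneg fun i _ => mul_nonneg (sq_nonneg _) (sq_nonneg _)
  have hM0 : 0 ≤ M := le_trans (abs_nonneg (v 0))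
    (le_ciSup (f := fun j : Fin (m+2) => |v j|) (Set.Finite.bddAbove (Set.finite_range _)) 0)
  have hUM : U ≤ M ^ 2 * W := by
    rw [hUdef, hWdef, Finset.mul_sum]
    apply Finset.sum_le_sum
    intro j _
    have h1 : |v j| ≤ M := le_ciSup (f := fun j : Fin (m+2) => |v j|)
      (Set.Finite.bddAbove (Set.finite_range _)) j
    have h2 : v j ^ 2 ≤ M ^ 2 := by
      rw [← sq_abs]; exact pow_le_pow_left₀ (abs_nonneg _) h1 2
    exact mul_le_mul_of_nonneg_right h2 (sq_nonneg _)
  have hUW : U ≤ W * W := by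
    have := Finset.sum_sq_le_sq_sum_of_nonneg (s := Finset.univ)
      (f := fun j => v j ^ 2) (fun i _ => sq_nonneg (v i))
    calc U = ∑ j, (v j ^ 2) ^ 2 := Finset.sum_congr rfl fun j _ => by ring
      _ ≤ (∑ j, v j ^ 2) ^ 2 := this
      _ = W * W := by rw [← hWdef]; ring
  have hLnr : Real.log (Real.exp 1 * nr) = L := by
    rw [hnr, hLdef]; norm_num
  -- final arithmetic
  clear_value H W U Q M L nr c1 c2 K Hm
  clear hinv hT e1 e2 hS1 hS2 hSH hHm hH0 hQsq hKdef hc1def hc2def hH hWdef hUdef hQdef hMdef hLdef hnr hHmdef v hn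
  have hLHSeq : (c1 * Q * U + c2 * (nr * nr - Q) * (W * W - U)) / K - W ^ 2
      = (Q - nr) / nr * U - (Q - nr) / (nr * (nr - 1)) * (W * W - U) := by
    rw [hKc, hc1c]
    field_simp
    ring
  rw [hLHSeq]
  have hRHSeq : W ^ 2 * (M ^ 2 / W * L ^ 2 + 1 / (nr - 1))
      = W * M ^ 2 * L ^ 2 + W ^ 2 / (nr - 1) := by
    field_simp
  rw [hLnr, hRHSeq]
  have hA0 : 0 ≤ (Q - nr) / nr := div_nonneg (by linarith) (le_of_lt hnrpos)
  have hA1 : (Q - nr) / nr ≤ Hm ^ 2 := by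
    rw [div_le_iff₀ hnrpos]
    nlinarith
  have hterm2 : 0 ≤ (Q - nr) / (nr * (nr - 1)) * (W * W - U) := by
    apply mul_nonneg (div_nonneg (by linarith) (by positivity))
    linarith
  have hchain : (Q - nr) / nr * U ≤ W * M ^ 2 * L ^ 2 := by
    calc (Q - nr) / nr * U ≤ Hm ^ 2 * U := mul_le_mul_of_nonneg_right hA1 hU0
      _ ≤ L ^ 2 * U := mul_le_mul_of_nonneg_right (pow_le_pow_left₀ hHm0 hHmL 2) hU0
      _ ≤ L ^ 2 * (M ^ 2 * W) := mul_le_mul_of_nonneg_left hUM (by positivity)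
      _ = W * M ^ 2 * L ^ 2 := by ring
  have hlast : 0 ≤ W ^ 2 / (nr - 1) := by positivity
  linarith
end
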